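/- arXiv:2002.05240 — 9 statements merged into one kernel-verified Lean document; each statement's English description precedes it below -/
import Mathlib

section
/- Fix an integer k ≥ 2, an integer n ≥ 1, and battlefield values v_1,…,v_n > 0 with V = Σ_{j=1}^n v_j. For j ∈ [n] define F_j(x) = min(1, (V·x/(k·v_j))^{1/(k-1)}) for x ≥ 0. Let μ be a probability measure on ℝ^n such that μ-almost surely a bid vector A satisfies A_j ≥ 0 for all j and Σ_{j=1}^n A_j ≤ 1, and such that for each j ∈ [n] and x ≥ 0, μ{A : A_j ≤ x} = F_j(x). Let ν be any probability measure on ℝ^n that is almost surely nonnegative with Σ_{j=1}^n A_j ≤ 1. If players 1,…,k−1 draw their bid vectors independently from μ and player k draws his bid vector from ν independently of the others, then 𝔼[U_k(A)] ≤ V/k; if moreover ν = μ then 𝔼[U_k(A)] = V/k. In particular, all k players independently sampling bid vectors from μ is a (symmetric mixed) Nash equilibrium of the Colonel Blotto game with unit budgets. -/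
open MeasureTheory

open Classical in
/-- Colonel Blotto payoff: each battlefield's value is split evenly among
the players tied for the highest bid on it. -/
noncomputable def blottoPayoff {k n : ℕ} (v : Fin n → ℝ) (A : Fin k → Fin n → ℝ)
    (i : Fin k) : ℝ :=
  ∑ j, if ∀ i', A i' j ≤ A i j then
      v j / ((Finset.univ.filter fun i' : Fin k => ∀ i'', A i'' j ≤ A i' j).card : ℝ)
    else 0

/-- The strategy profile where player `i₀` plays `ν` and everyone else plays `μ`. -/
noncomputable def devFamily {α : Type*} [MeasurableSpace α] {k : ℕ} (i₀ : Fin k)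
    (μ ν : Measure α) : Fin k → Measure α :=
  fun i => if i = i₀ then ν else μ

theorem devFamily_prob {α : Type*} [MeasurableSpace α] {k : ℕ} (i₀ : Fin k)
    (μ ν : Measure α) (hμ : IsProbabilityMeasure μ) (hν : IsProbabilityMeasure ν) :
    ∀ i, IsProbabilityMeasure (devFamily i₀ μ ν i) := by
  intro i
  unfold devFamily
  split <;> assumption

/-- Expected payoff of player `i` when each player `i'` independently samples its
bid vector from `P i'`. -/
noncomputable def expectedPayoff {k n : ℕ} (v : Fin n → ℝ)
    (P : Fin k → Measure (Fin n → ℝ)) (hP : ∀ i, IsProbabilityMeasure (P i))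
    (i : Fin k) : ℝ :=
  haveI := hP
  ∫ A, blottoPayoff v A i ∂(Measure.pi P)

/-! ### Auxiliary lemmas -/

open Classical in
lemma winSet_meas {k n : ℕ} (j : Fin n) (i : Fin k) :
    MeasurableSet {A : Fin k → Fin n → ℝ | ∀ i'', A i'' j ≤ A i j} := by
  have : {A : Fin k → Fin n → ℝ | ∀ i'', A i'' j ≤ A i j}
      = ⋂ i'', {A : Fin k → Fin n → ℝ | A i'' j ≤ A i j} := by
    ext A; simp [Set.mem_iInter]
  rw [this]
  exact MeasurableSet.iInter fun i'' => measurableSet_le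
    ((measurable_pi_apply j).comp (measurable_pi_apply i''))
    ((measurable_pi_apply j).comp (measurable_pi_apply i))

open Classical in
lemma blotto_meas {k n : ℕ} (v : Fin n → ℝ) (i : Fin k) :
    Measurable (fun A : Fin k → Fin n → ℝ => blottoPayoff v A i) := by
  unfold blottoPayoff
  refine Finset.measurable_sum _ (fun j _ => ?_)
  refine Measurable.ite (winSet_meas j i) ?_ measurable_const
  refine Measurable.div measurable_const ?_
  have : (fun A : Fin k → Fin n → ℝ =>
      ((Finset.univ.filter fun i' : Fin k => ∀ i'', A i'' j ≤ A i' j).card : ℝ))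
      = fun A => ∑ i' : Fin k, if ∀ i'', A i'' j ≤ A i' j then (1:ℝ) else 0 := by
    funext A
    rw [Finset.sum_boole]
  rw [this]
  exact Finset.measurable_sum _ fun i' _ =>
    Measurable.ite (winSet_meas j i') measurable_const measurable_const

open Classical in
lemma blotto_nonneg {k n : ℕ} {v : Fin n → ℝ} (hv : ∀ j, 0 < v j)
    (A : Fin k → Fin n → ℝ) (i : Fin k) : 0 ≤ blottoPayoff v A i := by
  unfold blottoPayoff
  refine Finset.sum_nonneg fun j _ => ?_
  split
  · exact div_nonneg (hv j).le (Nat.cast_nonneg _)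
  · exact le_rfl

open Classical in
lemma blotto_le {k n : ℕ} {v : Fin n → ℝ} (hv : ∀ j, 0 < v j)
    (A : Fin k → Fin n → ℝ) (i : Fin k) :
    blottoPayoff v A i ≤ ∑ j, if ∀ i', A i' j ≤ A i j then v j else 0 := by
  unfold blottoPayoff
  refine Finset.sum_le_sum fun j _ => ?_
  split
  · rename_i h
    have hmem : i ∈ Finset.univ.filter fun i' : Fin k => ∀ i'', A i'' j ≤ A i' j := by
      simp only [Finset.mem_filter, Finset.mem_univ, true_and]; exact h
    have hcard : (1:ℝ) ≤
        ((Finset.univ.filter fun i' : Fin k => ∀ i'', A i'' j ≤ A i' j).card : ℝ) := by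
      exact_mod_cast Finset.card_pos.mpr ⟨i, hmem⟩
    calc v j / _ ≤ v j / 1 := by
          apply div_le_div_of_nonneg_left (hv j).le one_pos hcard
      _ = v j := div_one _
  · exact le_rfl

lemma blotto_int {k n : ℕ} {v : Fin n → ℝ} (hv : ∀ j, 0 < v j)
    (π : Measure (Fin k → Fin n → ℝ)) [IsProbabilityMeasure π] (i : Fin k) :
    Integrable (fun A => blottoPayoff v A i) π := by
  classical
  refine (integrable_const (∑ j, v j)).mono' ((blotto_meas v i).aestronglyMeasurable) ?_
  refine Filter.Eventually.of_forall fun A => ?_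
  rw [Real.norm_eq_abs, abs_of_nonneg (blotto_nonneg hv A i)]
  calc blottoPayoff v A i ≤ ∑ j, if ∀ i', A i' j ≤ A i j then v j else 0 := blotto_le hv A i
    _ ≤ ∑ j, v j := Finset.sum_le_sum fun j _ => by
        split
        · exact le_rfl
        · exact (hv j).le

open Classical in
lemma blotto_sum {k n : ℕ} (hk : 0 < k) (v : Fin n → ℝ) (A : Fin k → Fin n → ℝ) :
    ∑ i, blottoPayoff v A i = ∑ j, v j := by
  unfold blottoPayoff
  rw [Finset.sum_comm]
  refine Finset.sum_congr rfl fun j _ => ?_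
  haveI : NeZero k := ⟨hk.ne'⟩
  set W := Finset.univ.filter fun i' : Fin k => ∀ i'', A i'' j ≤ A i' j with hW
  have hWne : W.Nonempty := by
    obtain ⟨b, -, hb⟩ := Finset.exists_max_image Finset.univ (fun i => A i j)
      ⟨0, Finset.mem_univ 0⟩
    refine ⟨b, ?_⟩
    simp only [hW, Finset.mem_filter, Finset.mem_univ, true_and]
    exact fun i'' => hb i'' (Finset.mem_univ _)
  have : ∀ i : Fin k, (if ∀ i', A i' j ≤ A i j then v j / (W.card : ℝ) else 0)
      = if i ∈ W then v j / (W.card : ℝ) else 0 := by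
    intro i; simp [hW]
  rw [Finset.sum_congr rfl fun i _ => this i, Finset.sum_ite_mem, Finset.univ_inter,
    Finset.sum_const, nsmul_eq_mul]
  have hc : (W.card : ℝ) ≠ 0 := by
    exact_mod_cast (Finset.card_pos.mpr hWne).ne'
  field_simp

open Classical in
lemma blotto_perm {k n : ℕ} (v : Fin n → ℝ) (A : Fin k → Fin n → ℝ)
    (σ : Equiv.Perm (Fin k)) (i : Fin k) :
    blottoPayoff v (fun i' => A (σ i')) i = blottoPayoff v A (σ i) := by
  unfold blottoPayoff
  refine Finset.sum_congr rfl fun j _ => ?_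
  have h2 : ∀ i' : Fin k, ((∀ i'', A (σ i'') j ≤ A (σ i') j) ↔ (∀ i'', A i'' j ≤ A (σ i') j)) :=
    fun i' => ⟨fun h i'' => by simpa using h (σ.symm i''), fun h i'' => h _⟩
  have hcard : (Finset.univ.filter fun i' : Fin k => ∀ i'', A (σ i'') j ≤ A (σ i') j).card
      = (Finset.univ.filter fun i' : Fin k => ∀ i'', A i'' j ≤ A i' j).card := by
    rw [Finset.filter_congr fun i' _ => h2 i']
    refine Finset.card_bij (fun a _ => σ a) ?_ ?_ ?_
    · intro a ha
      simp only [Finset.mem_filter, Finset.mem_univ, true_and] at ha ⊢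
      exact ha
    · intro a _ b _ hab; exact σ.injective hab
    · intro b hb
      refine ⟨σ.symm b, ?_, by simp⟩
      simp only [Finset.mem_filter, Finset.mem_univ, true_and] at hb ⊢
      simpa using hb
  rw [if_congr (h2 i) rfl rfl, hcard]

lemma min_rpow_pow {k' : ℕ} (hk' : 1 ≤ k') {a : ℝ} (ha : 0 ≤ a) :
    (min 1 (a ^ ((1:ℝ)/(k':ℝ)))) ^ k' = min 1 a := by
  have hk0 : (k' : ℝ) ≠ 0 := by positivity
  rcases le_or_gt a 1 with h | h
  · rw [min_eq_right (Real.rpow_le_one ha h (by positivity)), min_eq_right h,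
      ← Real.rpow_natCast (a ^ ((1:ℝ)/(k':ℝ))) k', ← Real.rpow_mul ha]
    rw [one_div_mul_cancel hk0, Real.rpow_one]
  · rw [min_eq_left (Real.one_le_rpow h.le (by positivity)), min_eq_left h.le, one_pow]

lemma pi_map_eval {k n : ℕ} (P : Fin k → Measure (Fin n → ℝ))
    (hP : ∀ i, IsProbabilityMeasure (P i)) (j : Fin n) :
    (Measure.pi P).map (fun A (i : Fin k) => A i j)
      = Measure.pi (fun i => (P i).map (fun B : Fin n → ℝ => B j)) := by
  haveI := hP
  haveI : ∀ i, IsProbabilityMeasure ((P i).map (fun B : Fin n → ℝ => B j)) :=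
    fun i => Measure.isProbabilityMeasure_map (measurable_pi_apply j).aemeasurable
  have hφ : Measurable (fun (A : Fin k → Fin n → ℝ) (i : Fin k) => A i j) :=
    measurable_pi_lambda _ fun i => (measurable_pi_apply j).comp (measurable_pi_apply i)
  refine (Measure.pi_eq (μ := fun i => (P i).map (fun B : Fin n → ℝ => B j))
    fun s hs => ?_).symm
  rw [Measure.map_apply hφ (MeasurableSet.univ_pi hs)]
  have hpre : (fun (A : Fin k → Fin n → ℝ) (i : Fin k) => A i j) ⁻¹' Set.pi Set.univ s
      = Set.pi Set.univ fun i => (fun B : Fin n → ℝ => B j) ⁻¹' s i := by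
    ext A; simp [Set.mem_pi]
  rw [hpre, Measure.pi_pi]
  exact Finset.prod_congr rfl fun i _ =>
    (Measure.map_apply (measurable_pi_apply j) (hs i)).symm

lemma win_prob {k' n : ℕ} (μ ν : Measure (Fin n → ℝ)) (hμ : IsProbabilityMeasure μ)
    (hν : IsProbabilityMeasure ν) (j : Fin n) :
    Measure.pi (devFamily (Fin.last k') μ ν)
      {A : Fin (k'+1) → Fin n → ℝ | ∀ i', A i' j ≤ A (Fin.last k') j}
    = ∫⁻ B, (μ {C : Fin n → ℝ | C j ≤ B j}) ^ k' ∂ν := by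
  haveI := hμ; haveI := hν
  haveI hP : ∀ i, IsProbabilityMeasure (devFamily (Fin.last k') μ ν i) := by
    intro i; unfold devFamily; split <;> infer_instance
  set e := fun B : Fin n → ℝ => B j with he
  have hemeas : Measurable e := measurable_pi_apply j
  set μj := μ.map e with hμj
  set νj := ν.map e with hνj
  haveI : IsProbabilityMeasure μj := Measure.isProbabilityMeasure_map hemeas.aemeasurable
  haveI : IsProbabilityMeasure νj := Measure.isProbabilityMeasure_map hemeas.aemeasurable
  have hφ : Measurable (fun (A : Fin (k'+1) → Fin n → ℝ) (i : Fin (k'+1)) => A i j) :=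
    measurable_pi_lambda _ fun i => hemeas.comp (measurable_pi_apply i)
  set S' : Set (Fin (k'+1) → ℝ) := {b | ∀ i', b i' ≤ b (Fin.last k')} with hS'
  have hS'm : MeasurableSet S' := by
    have : S' = ⋂ i', {b : Fin (k'+1) → ℝ | b i' ≤ b (Fin.last k')} := by
      ext b; simp [hS', Set.mem_iInter]
    rw [this]
    exact MeasurableSet.iInter fun i' =>
      measurableSet_le (measurable_pi_apply i') (measurable_pi_apply _)
  have hpre : {A : Fin (k'+1) → Fin n → ℝ | ∀ i', A i' j ≤ A (Fin.last k') j}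
      = (fun (A : Fin (k'+1) → Fin n → ℝ) (i : Fin (k'+1)) => A i j) ⁻¹' S' := rfl
  rw [hpre, ← Measure.map_apply hφ hS'm, pi_map_eval _ hP]
  have hm : (fun i => (devFamily (Fin.last k') μ ν i).map e)
      = devFamily (Fin.last k') μj νj := by
    funext i; unfold devFamily; split <;> rfl
  rw [hm]
  haveI hP2 : ∀ i, IsProbabilityMeasure (devFamily (Fin.last k') μj νj i) := by
    intro i; unfold devFamily; split <;> infer_instance
  set E := MeasurableEquiv.piFinSuccAbove (fun _ : Fin (k'+1) => ℝ) (Fin.last k') with hE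
  have hmp := measurePreserving_piFinSuccAbove (devFamily (Fin.last k') μj νj) (Fin.last k')
  set T : Set (ℝ × (Fin k' → ℝ)) := {p | ∀ t, p.2 t ≤ p.1} with hT
  have hTm : MeasurableSet T := by
    have : T = ⋂ t, {p : ℝ × (Fin k' → ℝ) | p.2 t ≤ p.1} := by
      ext p; simp [hT, Set.mem_iInter]
    rw [this]
    exact MeasurableSet.iInter fun t =>
      measurableSet_le (measurable_snd.eval) measurable_fst
  have hST : S' = E ⁻¹' T := by
    ext b
    simp only [hS', Set.mem_setOf_eq, Set.mem_preimage, hT, hE,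
      MeasurableEquiv.piFinSuccAbove_apply]
    constructor
    · intro h t; exact h _
    · intro h
      rw [Fin.forall_iff_succAbove (Fin.last k')]
      exact ⟨le_rfl, h⟩
  have h1 : Measure.pi (devFamily (Fin.last k') μj νj) S'
      = ((devFamily (Fin.last k') μj νj (Fin.last k')).prod
          (Measure.pi fun t => devFamily (Fin.last k') μj νj ((Fin.last k').succAbove t))) T := by
    rw [hST, ← hmp.map_eq, Measure.map_apply E.measurable hTm]
  rw [h1]
  have hd1 : devFamily (Fin.last k') μj νj (Fin.last k') = νj := by
    unfold devFamily; simp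
  have hd2 : (fun t => devFamily (Fin.last k') μj νj ((Fin.last k').succAbove t))
      = fun _ : Fin k' => μj := by
    funext t; unfold devFamily
    rw [if_neg (Fin.succAbove_ne _ t)]
  rw [hd1, hd2]
  rw [Measure.prod_apply hTm]
  have hslice : ∀ x : ℝ, (Prod.mk x ⁻¹' T) = Set.pi Set.univ (fun _ : Fin k' => Set.Iic x) := by
    intro x; ext y; simp [hT, Set.mem_pi, Pi.le_def]
  have h2 : ∀ x : ℝ, Measure.pi (fun _ : Fin k' => μj) (Prod.mk x ⁻¹' T)
      = (μ {C : Fin n → ℝ | C j ≤ x}) ^ k' := by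
    intro x
    rw [hslice x, Measure.pi_pi, Finset.prod_const, Finset.card_univ, Fintype.card_fin]
    congr 1
    rw [hμj, Measure.map_apply hemeas measurableSet_Iic]
    rfl
  simp_rw [h2]
  have hmono : Monotone (fun x : ℝ => μ {C : Fin n → ℝ | C j ≤ x}) := by
    intro a b hab
    exact measure_mono fun C hC => le_trans hC hab
  rw [hνj, lintegral_map (hmono.measurable.pow_const _) hemeas]

theorem stmt1 (k n : ℕ) (hk : 2 ≤ k) (hn : 1 ≤ n) (v : Fin n → ℝ) (hv : ∀ j, 0 < v j)
    (μ : Measure (Fin n → ℝ)) (hμ : IsProbabilityMeasure μ)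
    (hμvalid : ∀ᵐ A ∂μ, (∀ j, 0 ≤ A j) ∧ ∑ j, A j ≤ 1)
    (hμcdf : ∀ j, ∀ x : ℝ, 0 ≤ x →
      μ {A : Fin n → ℝ | A j ≤ x} =
        ENNReal.ofReal (min 1
          (((∑ l, v l) * x / ((k : ℝ) * v j)) ^ ((1 : ℝ) / ((k : ℝ) - 1)))))
    (ν : Measure (Fin n → ℝ)) (hν : IsProbabilityMeasure ν)
    (hνvalid : ∀ᵐ A ∂ν, (∀ j, 0 ≤ A j) ∧ ∑ j, A j ≤ 1) :
    expectedPayoff v (devFamily (⟨k - 1, by omega⟩ : Fin k) μ ν)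
        (devFamily_prob _ μ ν hμ hν) (⟨k - 1, by omega⟩ : Fin k) ≤ (∑ l, v l) / k ∧
    (ν = μ →
      expectedPayoff v (devFamily (⟨k - 1, by omega⟩ : Fin k) μ ν)
        (devFamily_prob _ μ ν hμ hν) (⟨k - 1, by omega⟩ : Fin k) = (∑ l, v l) / k) := by
  classical
  obtain ⟨k', rfl⟩ : ∃ k', k = k' + 1 := ⟨k - 1, by omega⟩
  have hk' : 1 ≤ k' := by omega
  set V := ∑ l, v l with hV
  have hV0 : 0 < V := Finset.sum_pos (fun l _ => hv l) ⟨⟨0, by omega⟩, Finset.mem_univ _⟩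
  constructor
  · -- inequality
    haveI hPinst : ∀ i, IsProbabilityMeasure (devFamily (Fin.last k') μ ν i) :=
      devFamily_prob _ μ ν hμ hν
    haveI : IsProbabilityMeasure (Measure.pi (devFamily (Fin.last k') μ ν)) := by
      infer_instance
    set i₀ := Fin.last k' with hi₀
    set π := Measure.pi (devFamily i₀ μ ν) with hπ
    set Ej := fun j : Fin n => {A : Fin (k'+1) → Fin n → ℝ | ∀ i', A i' j ≤ A i₀ j} with hEj
    have hEjm : ∀ j, MeasurableSet (Ej j) := fun j => winSet_meas j i₀
    have hBj_nonneg : ∀ j : Fin n, 0 ≤ ∫ B, B j ∂ν := fun j =>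
      integral_nonneg_of_ae (hνvalid.mono fun B hB => hB.1 j)
    have hBj_int : ∀ j : Fin n, Integrable (fun B : Fin n → ℝ => B j) ν := by
      intro j
      refine (integrable_const (1:ℝ)).mono' (measurable_pi_apply j).aestronglyMeasurable ?_
      filter_upwards [hνvalid] with B hB
      rw [Real.norm_eq_abs, abs_of_nonneg (hB.1 j)]
      calc B j ≤ ∑ l, B l := Finset.single_le_sum (fun l _ => hB.1 l) (Finset.mem_univ j)
        _ ≤ 1 := hB.2
    have hgint : Integrable (fun A => ∑ j, (Ej j).indicator (fun _ => v j) A) π :=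
      integrable_finset_sum _ fun j _ => (integrable_const (v j)).indicator (hEjm j)
    have step1 : ∫ A, blottoPayoff v A i₀ ∂π ≤ ∑ j, v j * (π (Ej j)).toReal := by
      have hle : ∀ A, blottoPayoff v A i₀ ≤ ∑ j, (Ej j).indicator (fun _ => v j) A := by
        intro A
        refine (blotto_le hv A i₀).trans_eq (Finset.sum_congr rfl fun j _ => ?_)
        by_cases hA : ∀ i', A i' j ≤ A i₀ j
        · rw [if_pos hA]
          exact (Set.indicator_of_mem (show A ∈ Ej j from hA) (fun _ => v j)).symm
        · rw [if_neg hA]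
          exact (Set.indicator_of_notMem (show A ∉ Ej j from hA) (fun _ => v j)).symm
      calc ∫ A, blottoPayoff v A i₀ ∂π
          ≤ ∫ A, ∑ j, (Ej j).indicator (fun _ => v j) A ∂π :=
            integral_mono (blotto_int hv π i₀) hgint hle
        _ = ∑ j, ∫ A, (Ej j).indicator (fun _ => v j) A ∂π :=
            integral_finset_sum _ fun j _ => (integrable_const (v j)).indicator (hEjm j)
        _ = ∑ j, v j * (π (Ej j)).toReal := by
            refine Finset.sum_congr rfl fun j _ => ?_
            rw [integral_indicator_const _ (hEjm j), smul_eq_mul, mul_comm]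
            rfl
    have step2 : ∀ j, (π (Ej j)).toReal ≤ (V / (((k'+1 : ℕ) : ℝ) * v j)) * ∫ B, B j ∂ν := by
      intro j
      have hπE : π (Ej j) = ∫⁻ B, (μ {C : Fin n → ℝ | C j ≤ B j}) ^ k' ∂ν :=
        win_prob μ ν hμ hν j
      set c := V / (((k'+1 : ℕ) : ℝ) * v j) with hc
      have hc0 : 0 < c := div_pos hV0 (mul_pos (by positivity) (hv j))
      have key : π (Ej j) ≤ ENNReal.ofReal (c * ∫ B, B j ∂ν) := by
        rw [hπE]
        have hstep : ∀ᵐ B ∂ν,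
            (μ {C : Fin n → ℝ | C j ≤ B j}) ^ k' ≤ ENNReal.ofReal c * ENNReal.ofReal (B j) := by
          filter_upwards [hνvalid] with B hB
          have hx : 0 ≤ B j := hB.1 j
          rw [hμcdf j (B j) hx]
          have hcast : (((k'+1 : ℕ) : ℝ)) - 1 = (k' : ℝ) := by push_cast; ring
          have harg : V * B j / (((k'+1:ℕ):ℝ) * v j) = c * B j := by
            rw [hc]; ring
          rw [hcast, harg,
            ← ENNReal.ofReal_pow (le_min zero_le_one (Real.rpow_nonneg (by positivity) _)),
            min_rpow_pow hk' (by positivity), ← ENNReal.ofReal_mul hc0.le]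
          exact ENNReal.ofReal_le_ofReal (min_le_right _ _)
        calc ∫⁻ B, (μ {C : Fin n → ℝ | C j ≤ B j}) ^ k' ∂ν
            ≤ ∫⁻ B, ENNReal.ofReal c * ENNReal.ofReal (B j) ∂ν := lintegral_mono_ae hstep
          _ = ENNReal.ofReal c * ∫⁻ B, ENNReal.ofReal (B j) ∂ν :=
              lintegral_const_mul _ ((measurable_pi_apply j).ennreal_ofReal)
          _ = ENNReal.ofReal c * ENNReal.ofReal (∫ B, B j ∂ν) := by
              rw [← ofReal_integral_eq_lintegral_ofReal (hBj_int j)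
                (hνvalid.mono fun B hB => hB.1 j)]
          _ = ENNReal.ofReal (c * ∫ B, B j ∂ν) := (ENNReal.ofReal_mul hc0.le).symm
      exact ENNReal.toReal_le_of_le_ofReal (mul_nonneg hc0.le (hBj_nonneg j)) key
    have step3 : ∑ j, v j * ((V / (((k'+1 : ℕ):ℝ) * v j)) * ∫ B, B j ∂ν)
        = (V / ((k'+1 : ℕ):ℝ)) * ∫ B, ∑ j, B j ∂ν := by
      rw [integral_finset_sum _ (fun j _ => hBj_int j), Finset.mul_sum]
      refine Finset.sum_congr rfl fun j _ => ?_
      have : v j ≠ 0 := (hv j).ne'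
      field_simp
    have step4 : (V / ((k'+1:ℕ):ℝ)) * ∫ B, ∑ j, B j ∂ν ≤ V / ((k'+1:ℕ):ℝ) := by
      have h1 : ∫ B, ∑ j, B j ∂ν ≤ 1 := by
        calc ∫ B, ∑ j, B j ∂ν ≤ ∫ _B, (1:ℝ) ∂ν := by
              refine integral_mono_ae (integrable_finset_sum _ fun j _ => hBj_int j)
                (integrable_const 1) ?_
              filter_upwards [hνvalid] with B hB using hB.2
          _ = 1 := by simp
      have h2 : 0 < V / ((k'+1:ℕ):ℝ) := by positivity
      nlinarith
    show ∫ A, blottoPayoff v A i₀ ∂π ≤ V / ((k'+1:ℕ):ℝ)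
    refine step1.trans (le_trans ?_ (step3 ▸ step4))
    exact Finset.sum_le_sum fun j _ => mul_le_mul_of_nonneg_left (step2 j) (hv j).le
  · -- equality
    intro hνμ
    subst hνμ
    have hPall : devFamily (Fin.last k') ν ν = fun _ : Fin (k'+1) => ν := by
      funext i; unfold devFamily; split <;> rfl
    haveI : ∀ i : Fin (k'+1), IsProbabilityMeasure ((fun _ : Fin (k'+1) => ν) i) := fun _ => hν
    haveI : IsProbabilityMeasure (Measure.pi (fun _ : Fin (k'+1) => ν)) := by infer_instance
    set π := Measure.pi (fun _ : Fin (k'+1) => ν) with hπ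
    have hint : ∀ i : Fin (k'+1), Integrable (fun A => blottoPayoff v A i) π :=
      fun i => blotto_int hv π i
    have hsym : ∀ i : Fin (k'+1),
        ∫ A, blottoPayoff v A i ∂π = ∫ A, blottoPayoff v A (Fin.last k') ∂π := by
      intro i
      set σ := Equiv.swap i (Fin.last k') with hσ
      have hmp := measurePreserving_piCongrLeft (fun _ : Fin (k'+1) => ν) σ
      set E := MeasurableEquiv.piCongrLeft (fun _ : Fin (k'+1) => Fin n → ℝ) σ with hEd
      have hEapp : ∀ A : Fin (k'+1) → Fin n → ℝ, E A = fun i' => A (σ.symm i') := by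
        intro A; funext i'
        conv_lhs => rw [show i' = σ (σ.symm i') from (σ.apply_symm_apply i').symm]
        exact MeasurableEquiv.piCongrLeft_apply_apply (β := fun _ : Fin (k'+1) => Fin n → ℝ) σ A (σ.symm i')
      have hcomp := hmp.integral_comp E.measurableEmbedding (fun A => blottoPayoff v A i)
      calc ∫ A, blottoPayoff v A i ∂π
          = ∫ A, blottoPayoff v (E A) i ∂π := hcomp.symm
        _ = ∫ A, blottoPayoff v A (Fin.last k') ∂π := by
            refine integral_congr_ae (Filter.Eventually.of_forall fun A => ?_)
            show blottoPayoff v (E A) i = blottoPayoff v A (Fin.last k')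
            rw [hEapp A, blotto_perm v A σ.symm i]
            congr 1
            rw [hσ, Equiv.symm_swap, Equiv.swap_apply_left]
    have hsum : ∑ i : Fin (k'+1), ∫ A, blottoPayoff v A i ∂π = V := by
      rw [← integral_finset_sum _ (fun i _ => hint i)]
      have : (fun A => ∑ i : Fin (k'+1), blottoPayoff v A i)
          = fun _ : Fin (k'+1) → Fin n → ℝ => V :=
        funext fun A => blotto_sum (by omega) v A
      rw [this]
      simp
    have hkey : ((k'+1 : ℕ) : ℝ) * ∫ A, blottoPayoff v A (Fin.last k') ∂π = V := by
      rw [← hsum, Finset.sum_congr rfl fun i _ => hsym i, Finset.sum_const,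
        Finset.card_univ, Fintype.card_fin, nsmul_eq_mul]
    have hne : ((k'+1 : ℕ) : ℝ) ≠ 0 := by positivity
    have : ∫ A, blottoPayoff v A (Fin.last k') ∂π = V / ((k'+1 : ℕ) : ℝ) := by
      rw [eq_div_iff hne, mul_comm]
      exact hkey
    show ∫ A, blottoPayoff v A (Fin.last k') ∂(Measure.pi (devFamily (Fin.last k') ν ν))
        = V / ((k'+1:ℕ):ℝ)
    rw [hPall]
    exact this
end

section
/- Let n ≥ m ≥ 1 be integers and let s_1,…,s_n be real numbers with 0 ≤ s_j ≤ 1 for all j and Σ_{j=1}^n s_j = m. Then there exists a matrix M ∈ ℝ^{n×m} such that MᵀM = I_m (the columns of M are orthonormal) and the j-th row M_{j,*} of M satisfies ‖M_{j,*}‖² = s_j for every j ∈ [n]. -/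
lemma exists_perm' {α : Type} [DecidableEq α] (a b j k : α) (hab : a ≠ b) (hjk : j ≠ k) :
    ∃ σ : Equiv.Perm α, σ a = j ∧ σ b = k := by
  refine ⟨(Equiv.swap a j).trans (Equiv.swap ((Equiv.swap a j) b) k), ?_, ?_⟩
  · simp only [Equiv.trans_apply, Equiv.swap_apply_left]
    apply Equiv.swap_apply_of_ne_of_ne
    · intro h
      apply hab
      have h2 := congrArg (Equiv.swap a j) h.symm
      rw [Equiv.swap_apply_self, Equiv.swap_apply_right] at h2
      exact h2.symm
    · exact hjk
  · simp

lemma perm_reduce {n m : ℕ} (σ : Equiv.Perm (Fin n)) (s : Fin n → ℝ)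
    (h : ∃ M : Matrix (Fin n) (Fin m) ℝ, M.transpose * M = 1 ∧ ∀ j, ∑ l, (M j l) ^ 2 = s (σ j)) :
    ∃ M : Matrix (Fin n) (Fin m) ℝ, M.transpose * M = 1 ∧ ∀ j, ∑ l, (M j l) ^ 2 = s j := by
  obtain ⟨M, h1, h2⟩ := h
  refine ⟨Matrix.of fun x => M (σ.symm x), ?_, ?_⟩
  · ext c d
    have := congrFun (congrFun h1 c) d
    simp only [Matrix.mul_apply, Matrix.transpose_apply, Matrix.of_apply] at this ⊢
    rw [← this, ← Equiv.sum_comp σ.symm (fun x => M x c * M x d)]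
  · intro x
    simpa using h2 (σ.symm x)

lemma moveA (p m : ℕ) (r : Fin (p+2) → ℝ)
    (h0j : 0 ≤ r ((Fin.last p).castSucc)) (h0k : 0 ≤ r (Fin.last (p+1)))
    (M' : Matrix (Fin (p+1)) (Fin m) ℝ) (h1 : M'.transpose * M' = 1)
    (h2 : ∀ x : Fin (p+1), ∑ l, (M' x l) ^ 2 =
      if x = Fin.last p then r ((Fin.last p).castSucc) + r (Fin.last (p+1)) else r x.castSucc) :
    ∃ M : Matrix (Fin (p+2)) (Fin m) ℝ, M.transpose * M = 1 ∧ ∀ x, ∑ l, (M x l) ^ 2 = r x := by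
  set sj := r ((Fin.last p).castSucc) with hsj
  set sk := r (Fin.last (p+1)) with hsk
  set t := sj + sk with ht
  have ht0 : 0 ≤ t := by positivity
  set a : ℝ := if t = 0 then 1 else Real.sqrt (sj / t) with ha
  set b : ℝ := if t = 0 then 0 else Real.sqrt (sk / t) with hb
  have hat : a ^ 2 * t = sj := by
    by_cases h : t = 0
    · simp [ha, h]
      linarith [ht ▸ h]
    · rw [ha, if_neg h, Real.sq_sqrt (div_nonneg h0j ht0), div_mul_cancel₀ _ h]
  have hab : a ^ 2 + b ^ 2 = 1 := by
    by_cases h : t = 0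
    · simp [ha, hb, h]
    · rw [ha, hb, if_neg h, if_neg h, Real.sq_sqrt (div_nonneg h0j ht0),
        Real.sq_sqrt (div_nonneg h0k ht0)]
      field_simp
      exact ht.symm
  have hbt : b ^ 2 * t = sk := by linear_combination t * hab - hat
  set v : Fin m → ℝ := M' (Fin.last p) with hv
  have hvt : ∑ l, (v l) ^ 2 = t := by simpa using h2 (Fin.last p)
  have key : ∀ c d, ∑ x, M' x c * M' x d = if c = d then 1 else 0 := by
    intro c d
    have := congrFun (congrFun h1 c) d
    simpa [Matrix.mul_apply, Matrix.one_apply] using this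
  have hne : ∀ x : Fin p, x.castSucc ≠ Fin.last p := fun x => Fin.ne_of_lt (Fin.castSucc_lt_last x)
  refine ⟨Matrix.of (Fin.snoc (fun x => (if x = Fin.last p then a else 1) • M' x) (b • v)), ?_, ?_⟩
  · ext c d
    have hk := key c d
    rw [Fin.sum_univ_castSucc] at hk
    simp only [Matrix.mul_apply, Matrix.transpose_apply, Matrix.of_apply, Matrix.one_apply]
    rw [Fin.sum_univ_castSucc]
    simp only [Fin.snoc_castSucc, Fin.snoc_last, Pi.smul_apply, smul_eq_mul]
    rw [Fin.sum_univ_castSucc]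
    simp [hne]
    linear_combination hk + (v c * v d) * hab
  · intro x
    induction x using Fin.lastCases with
    | last =>
      simp only [Matrix.of_apply, Fin.snoc_last, Pi.smul_apply, smul_eq_mul, mul_pow]
      rw [← Finset.mul_sum, hvt]
      exact hbt
    | cast x =>
      induction x using Fin.lastCases with
      | last =>
        simp only [Matrix.of_apply, Fin.snoc_castSucc, if_pos rfl, Pi.smul_apply, smul_eq_mul,
          mul_pow]
        rw [← Finset.mul_sum, hvt]
        exact hat
      | cast y =>
        simp only [Matrix.of_apply, Fin.snoc_castSucc, if_neg (hne y), Pi.smul_apply, smul_eq_mul,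
          one_mul]
        rw [h2 y.castSucc, if_neg (hne y)]

lemma moveB (p q : ℕ) (r : Fin (p+2) → ℝ)
    (hj1 : r ((Fin.last p).castSucc) ≤ 1) (hk1 : r (Fin.last (p+1)) ≤ 1)
    (ht0 : 0 ≤ r ((Fin.last p).castSucc) + r (Fin.last (p+1)) - 1)
    (M' : Matrix (Fin (p+1)) (Fin (q+1)) ℝ) (h1 : M'.transpose * M' = 1)
    (h2 : ∀ x : Fin (p+1), ∑ l, (M' x l) ^ 2 =
      if x = Fin.last p then r ((Fin.last p).castSucc) + r (Fin.last (p+1)) - 1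
      else r x.castSucc) :
    ∃ M : Matrix (Fin (p+2)) (Fin (q+2)) ℝ, M.transpose * M = 1 ∧ ∀ x, ∑ l, (M x l) ^ 2 = r x := by
  set sj := r ((Fin.last p).castSucc) with hsj
  set sk := r (Fin.last (p+1)) with hsk
  set t := sj + sk - 1 with htdef
  have ht1 : t ≤ 1 := by rw [htdef]; linarith
  set β : ℝ := if t = 1 then 0 else Real.sqrt ((sj - t) / (1 - t)) with hβ
  have hβ2 : β ^ 2 = if t = 1 then 0 else (sj - t) / (1 - t) := by
    by_cases h : t = 1
    · simp [hβ, h]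
    · rw [hβ, if_neg h, if_neg h, Real.sq_sqrt]
      apply div_nonneg (by rw [htdef]; linarith) (by cases (lt_or_eq_of_le ht1) with
        | inl h' => linarith
        | inr h' => exact absurd h' h)
  have hβle : β ^ 2 ≤ 1 := by
    rw [hβ2]
    by_cases h : t = 1
    · simp [h]
    · rw [if_neg h]
      have h1t : 0 < 1 - t := by
        cases (lt_or_eq_of_le ht1) with
        | inl h' => linarith
        | inr h' => exact absurd h' h
      rw [div_le_one h1t]; linarith
  have hβ0 : 0 ≤ β ^ 2 := sq_nonneg β
  set α : ℝ := Real.sqrt (1 - β ^ 2) with hα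
  have hα2 : α ^ 2 = 1 - β ^ 2 := Real.sq_sqrt (by linarith)
  have hαβ : α ^ 2 + β ^ 2 = 1 := by linarith
  have hαt : α ^ 2 * t + β ^ 2 = sj := by
    by_cases h : t = 1
    · have hsj1 : sj = 1 := by rw [htdef] at h; linarith
      have hb0 : β ^ 2 = 0 := by rw [hβ, if_pos h]; ring
      rw [h]
      linear_combination hα2 - hsj1
    · have h1t : 0 < 1 - t := by
        cases (lt_or_eq_of_le ht1) with
        | inl h' => linarith
        | inr h' => exact absurd h' h
      have hb : β ^ 2 * (1 - t) = sj - t := by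
        rw [hβ2, if_neg h, div_mul_cancel₀ _ (ne_of_gt h1t)]
      linear_combination hα2 * t + hb
  have hβt : β ^ 2 * t + α ^ 2 = sk := by linear_combination (t + 1) * hαβ - hαt + htdef
  set v : Fin (q+1) → ℝ := M' (Fin.last p) with hv
  have hvt : ∑ l, (v l) ^ 2 = t := by simpa using h2 (Fin.last p)
  have key : ∀ c d, ∑ x, M' x c * M' x d = if c = d then 1 else 0 := by
    intro c d
    have := congrFun (congrFun h1 c) d
    simpa [Matrix.mul_apply, Matrix.one_apply] using this
  have hne : ∀ x : Fin p, x.castSucc ≠ Fin.last p := fun x => Fin.ne_of_lt (Fin.castSucc_lt_last x)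
  have hneq : ∀ x : Fin (q+1), x.castSucc ≠ Fin.last (q+1) :=
    fun x => Fin.ne_of_lt (Fin.castSucc_lt_last x)
  have hneq' : ∀ x : Fin (q+1), Fin.last (q+1) ≠ x.castSucc := fun x => (hneq x).symm
  refine ⟨Matrix.of (Fin.snoc
      (fun x => Fin.snoc ((if x = Fin.last p then α else 1) • M' x)
        (if x = Fin.last p then β else 0))
      (Fin.snoc (β • v) (-α))), ?_, ?_⟩
  · ext c d
    simp only [Matrix.mul_apply, Matrix.transpose_apply, Matrix.of_apply, Matrix.one_apply]
    rw [Fin.sum_univ_castSucc]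
    simp only [Fin.snoc_castSucc, Fin.snoc_last]
    rw [Fin.sum_univ_castSucc]
    simp only [hne, if_false, reduceIte, one_smul]
    induction d using Fin.lastCases with
    | last =>
      induction c using Fin.lastCases with
      | last =>
        simp [hneq]
        linarith
      | cast c' =>
        simp [hneq, hneq', Pi.smul_apply, smul_eq_mul]
        ring
    | cast d' =>
      induction c using Fin.lastCases with
      | last =>
        simp [hneq, hneq']
        ring
      | cast c' =>
        have hk := key c' d'
        rw [Fin.sum_univ_castSucc] at hk
        simp only [Fin.snoc_castSucc, Pi.smul_apply, smul_eq_mul, Fin.castSucc_inj, one_mul]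
        linear_combination hk + v c' * v d' * hαβ
  · intro x
    induction x using Fin.lastCases with
    | last =>
      simp only [Matrix.of_apply, Fin.snoc_last]
      rw [Fin.sum_univ_castSucc]
      simp only [Fin.snoc_castSucc, Fin.snoc_last, Pi.smul_apply, smul_eq_mul, mul_pow]
      rw [← Finset.mul_sum, hvt, ← hsk]
      linear_combination hβt
    | cast x =>
      induction x using Fin.lastCases with
      | last =>
        simp only [Matrix.of_apply, Fin.snoc_castSucc, reduceIte]
        rw [Fin.sum_univ_castSucc]
        simp only [Fin.snoc_castSucc, Fin.snoc_last, Pi.smul_apply, smul_eq_mul, mul_pow]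
        rw [← Finset.mul_sum, hvt]
        exact hαt
      | cast y =>
        simp only [Matrix.of_apply, Fin.snoc_castSucc, if_neg (hne y)]
        rw [Fin.sum_univ_castSucc]
        simp only [Fin.snoc_castSucc, Fin.snoc_last, Pi.smul_apply, smul_eq_mul, one_mul]
        rw [h2 y.castSucc, if_neg (hne y)]
        norm_num

lemma key_main (n : ℕ) : ∀ m : ℕ, 1 ≤ m → m ≤ n → ∀ s : Fin n → ℝ, (∀ j, 0 ≤ s j) →
    (∀ j, s j ≤ 1) → (∑ j, s j = (m : ℝ)) →
    ∃ M : Matrix (Fin n) (Fin m) ℝ,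
      M.transpose * M = 1 ∧ ∀ j, ∑ l, (M j l) ^ 2 = s j := by
  induction n using Nat.strong_induction_on with
  | _ n ih =>
  intro m hm hmn s hs0 hs1 hsum
  rcases Nat.lt_or_ge m 2 with hm2 | hm2
  · interval_cases m
    refine ⟨Matrix.of fun x _ => Real.sqrt (s x), ?_, ?_⟩
    · ext c d
      rw [Subsingleton.elim c d]
      simp only [Matrix.mul_apply, Matrix.transpose_apply, Matrix.of_apply, Matrix.one_apply_eq]
      rw [Finset.sum_congr rfl fun x _ => Real.mul_self_sqrt (hs0 x)]
      simpa using hsum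
    · intro j
      simp [Fin.sum_univ_one, Real.sq_sqrt (hs0 j)]
  · obtain ⟨p, rfl⟩ : ∃ p, n = p + 2 := ⟨n - 2, by omega⟩
    have hne : ∀ x : Fin p, x.castSucc ≠ Fin.last p :=
      fun x => Fin.ne_of_lt (Fin.castSucc_lt_last x)
    by_cases hA : ∃ j k : Fin (p+2), j ≠ k ∧ s j + s k ≤ 1
    · obtain ⟨j, k, hjk, hjk1⟩ := hA
      have hlt : m ≤ p + 1 := by
        by_contra hcon
        have hall : ∀ x : Fin (p+2), s x = 1 := by
          intro x
          by_contra hx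
          have hlt2 : ∑ i, s i < ∑ _i : Fin (p+2), (1:ℝ) :=
            Finset.sum_lt_sum (fun i _ => hs1 i)
              ⟨x, Finset.mem_univ x, lt_of_le_of_ne (hs1 x) hx⟩
          rw [hsum] at hlt2
          simp only [Finset.sum_const, Finset.card_univ, Fintype.card_fin, nsmul_eq_mul,
            mul_one] at hlt2
          have : ((p:ℝ) + 2) ≤ (m:ℝ) := by exact_mod_cast (by omega : p + 2 ≤ m)
          push_cast at hlt2
          linarith
        linarith [hall j, hall k]
      obtain ⟨σ, hσ1, hσ2⟩ := exists_perm' ((Fin.last p).castSucc) (Fin.last (p+1)) j k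
        (Fin.ne_of_lt (Fin.castSucc_lt_last _)) hjk
      apply perm_reduce σ
      set s' : Fin (p+1) → ℝ := fun x =>
        if x = Fin.last p then s (σ ((Fin.last p).castSucc)) + s (σ (Fin.last (p+1)))
        else s (σ x.castSucc) with hs'def
      have hs'0 : ∀ x, 0 ≤ s' x := by
        intro x
        simp only [hs'def]
        split
        · exact add_nonneg (hs0 _) (hs0 _)
        · exact hs0 _
      have hs'1 : ∀ x, s' x ≤ 1 := by
        intro x
        simp only [hs'def]
        split
        · rw [hσ1, hσ2]; exact hjk1
        · exact hs1 _
      have hs'sum : ∑ x, s' x = (m : ℝ) := by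
        have e1 : ∑ x : Fin (p+2), s (σ x) = (m:ℝ) := (Equiv.sum_comp σ s).trans hsum
        rw [Fin.sum_univ_castSucc] at e1
        rw [Fin.sum_univ_castSucc] at e1
        rw [Fin.sum_univ_castSucc]
        simp only [hs'def, if_pos rfl, if_neg (hne _)]
        linarith [e1]
      obtain ⟨M', hM1, hM2⟩ := ih (p+1) (by omega) m hm hlt s' hs'0 hs'1 hs'sum
      exact moveA p m (fun x => s (σ x)) (hs0 _) (hs0 _) M' hM1
        (by intro x; rw [hM2 x])
    · push_neg at hA
      obtain ⟨q, rfl⟩ : ∃ q, m = q + 2 := ⟨m - 2, by omega⟩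
      have hpair := hA ((Fin.last p).castSucc) (Fin.last (p+1))
        (Fin.ne_of_lt (Fin.castSucc_lt_last _))
      set s' : Fin (p+1) → ℝ := fun x =>
        if x = Fin.last p then s ((Fin.last p).castSucc) + s (Fin.last (p+1)) - 1
        else s x.castSucc with hs'def
      have hs'0 : ∀ x, 0 ≤ s' x := by
        intro x
        simp only [hs'def]
        split
        · linarith
        · exact hs0 _
      have hs'1 : ∀ x, s' x ≤ 1 := by
        intro x
        simp only [hs'def]
        split
        · linarith [hs1 ((Fin.last p).castSucc), hs1 (Fin.last (p+1))]
        · exact hs1 _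
      have hs'sum : ∑ x, s' x = ((q+1 : ℕ) : ℝ) := by
        have e1 := hsum
        rw [Fin.sum_univ_castSucc] at e1
        rw [Fin.sum_univ_castSucc] at e1
        rw [Fin.sum_univ_castSucc]
        simp only [hs'def, if_pos rfl, if_neg (hne _)]
        push_cast at e1 ⊢
        linarith [e1]
      obtain ⟨M', hM1, hM2⟩ := ih (p+1) (by omega) (q+1) (by omega) (by omega) s' hs'0 hs'1 hs'sum
      exact moveB p q s (hs1 _) (hs1 _) (by linarith) M' hM1
        (by intro x; rw [hM2 x])

theorem stmt7 (n m : ℕ) (hm : 1 ≤ m) (hmn : m ≤ n) (s : Fin n → ℝ)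
    (hs0 : ∀ j, 0 ≤ s j) (hs1 : ∀ j, s j ≤ 1) (hsum : ∑ j, s j = (m : ℝ)) :
    ∃ M : Matrix (Fin n) (Fin m) ℝ,
      M.transpose * M = 1 ∧ ∀ j, ∑ l, (M j l) ^ 2 = s j :=
  key_main n m hm hmn s hs0 hs1 hsum
end

section
/- Let m ≥ 1 be an integer, let u_1, u_2 ∈ ℝ^m satisfy u_1·u_2 = 0, and let t_1, t_2 ∈ ℝ satisfy ‖u_1‖² ≥ t_1 ≥ t_2 ≥ ‖u_2‖². Then there exist real numbers a, b with a² + b² = 1 such that the vectors w_1 = a·u_1 − b·u_2 and w_2 = b·u_1 + a·u_2 satisfy: (i) for every x ∈ ℝ^m, (w_1·x)² + (w_2·x)² = (u_1·x)² + (u_2·x)² (equivalently, w_1w_1ᵀ + w_2w_2ᵀ = u_1u_1ᵀ + u_2u_2ᵀ as m×m matrices); (ii) ‖w_1‖² ≥ t_1 ≥ t_2 ≥ ‖w_2‖²; and (iii) ‖w_1‖² = t_1 or ‖w_2‖² = t_2. -/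
theorem stmt8 (m : ℕ) (hm : 1 ≤ m) (u₁ u₂ : Fin m → ℝ)
    (horth : ∑ i, u₁ i * u₂ i = 0) (t₁ t₂ : ℝ)
    (h₁ : t₁ ≤ ∑ i, u₁ i * u₁ i) (h₁₂ : t₂ ≤ t₁) (h₂ : ∑ i, u₂ i * u₂ i ≤ t₂) :
    ∃ a b : ℝ, a ^ 2 + b ^ 2 = 1 ∧
      ∀ w₁ w₂ : Fin m → ℝ,
        w₁ = (fun i => a * u₁ i - b * u₂ i) → w₂ = (fun i => b * u₁ i + a * u₂ i) →
        (∀ x : Fin m → ℝ,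
          (∑ i, w₁ i * x i) ^ 2 + (∑ i, w₂ i * x i) ^ 2 =
            (∑ i, u₁ i * x i) ^ 2 + (∑ i, u₂ i * x i) ^ 2) ∧
        (t₁ ≤ ∑ i, w₁ i * w₁ i ∧ ∑ i, w₂ i * w₂ i ≤ t₂) ∧
        (∑ i, w₁ i * w₁ i = t₁ ∨ ∑ i, w₂ i * w₂ i = t₂) := by
  set A := ∑ i, u₁ i * u₁ i with hA
  set B := ∑ i, u₂ i * u₂ i with hB
  obtain ⟨a, b, hab, hw1, hw2, hor⟩ :
      ∃ a b : ℝ, a ^ 2 + b ^ 2 = 1 ∧ t₁ ≤ a ^ 2 * A + b ^ 2 * B ∧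
        b ^ 2 * A + a ^ 2 * B ≤ t₂ ∧
        (a ^ 2 * A + b ^ 2 * B = t₁ ∨ b ^ 2 * A + a ^ 2 * B = t₂) := by
    by_cases h : t₁ + t₂ ≤ A + B
    · by_cases hAB : A = B
      · refine ⟨1, 0, by norm_num, by nlinarith, by nlinarith, Or.inr (by nlinarith)⟩
      · have hlt : B < A := lt_of_le_of_ne (by linarith) (fun e => hAB e.symm)
        set c := (t₂ - B) / (A - B) with hc
        have hc0 : 0 ≤ c := div_nonneg (by linarith) (by linarith)
        have hc1 : c ≤ 1 := (div_le_one (by linarith)).2 (by linarith)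
        have key : c * (A - B) = t₂ - B := div_mul_cancel₀ _ (sub_pos.mpr hlt).ne'
        refine ⟨Real.sqrt (1 - c), Real.sqrt c, ?_, ?_, ?_, Or.inr ?_⟩ <;>
          rw [Real.sq_sqrt (by linarith : (0:ℝ) ≤ 1 - c), Real.sq_sqrt hc0] <;>
          nlinarith [key]
    · push_neg at h
      have hlt : B < A := by
        by_contra hle
        push_neg at hle
        linarith
      set c := (A - t₁) / (A - B) with hc
      have hc0 : 0 ≤ c := div_nonneg (by linarith) (by linarith)
      have hc1 : c ≤ 1 := (div_le_one (by linarith)).2 (by linarith)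
      have key : c * (A - B) = A - t₁ := div_mul_cancel₀ _ (sub_pos.mpr hlt).ne'
      refine ⟨Real.sqrt (1 - c), Real.sqrt c, ?_, ?_, ?_, Or.inl ?_⟩ <;>
        rw [Real.sq_sqrt (by linarith : (0:ℝ) ≤ 1 - c), Real.sq_sqrt hc0] <;>
        nlinarith [key]
  refine ⟨a, b, hab, ?_⟩
  rintro w₁ w₂ rfl rfl
  have e1 : ∀ x : Fin m → ℝ, ∑ i, (a * u₁ i - b * u₂ i) * x i =
      a * (∑ i, u₁ i * x i) - b * (∑ i, u₂ i * x i) := by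
    intro x
    rw [Finset.mul_sum, Finset.mul_sum, ← Finset.sum_sub_distrib]
    exact Finset.sum_congr rfl fun i _ => by ring
  have e2 : ∀ x : Fin m → ℝ, ∑ i, (b * u₁ i + a * u₂ i) * x i =
      b * (∑ i, u₁ i * x i) + a * (∑ i, u₂ i * x i) := by
    intro x
    rw [Finset.mul_sum, Finset.mul_sum, ← Finset.sum_add_distrib]
    exact Finset.sum_congr rfl fun i _ => by ring
  have n1 : ∑ i, (a * u₁ i - b * u₂ i) * (a * u₁ i - b * u₂ i) =
      a ^ 2 * A + b ^ 2 * B := by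
    rw [e1 (fun i => a * u₁ i - b * u₂ i)]
    have q1 : ∑ i, u₁ i * (a * u₁ i - b * u₂ i) = a * A - b * (∑ i, u₁ i * u₂ i) := by
      rw [hA, Finset.mul_sum, Finset.mul_sum, ← Finset.sum_sub_distrib]
      exact Finset.sum_congr rfl fun i _ => by ring
    have q2 : ∑ i, u₂ i * (a * u₁ i - b * u₂ i) = a * (∑ i, u₁ i * u₂ i) - b * B := by
      rw [hB, Finset.mul_sum, Finset.mul_sum, ← Finset.sum_sub_distrib]
      exact Finset.sum_congr rfl fun i _ => by ring
    rw [q1, q2, horth]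
    ring
  have n2 : ∑ i, (b * u₁ i + a * u₂ i) * (b * u₁ i + a * u₂ i) =
      b ^ 2 * A + a ^ 2 * B := by
    rw [e2 (fun i => b * u₁ i + a * u₂ i)]
    have q1 : ∑ i, u₁ i * (b * u₁ i + a * u₂ i) = b * A + a * (∑ i, u₁ i * u₂ i) := by
      rw [hA, Finset.mul_sum, Finset.mul_sum, ← Finset.sum_add_distrib]
      exact Finset.sum_congr rfl fun i _ => by ring
    have q2 : ∑ i, u₂ i * (b * u₁ i + a * u₂ i) = b * (∑ i, u₁ i * u₂ i) + a * B := by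
      rw [hB, Finset.mul_sum, Finset.mul_sum, ← Finset.sum_add_distrib]
      exact Finset.sum_congr rfl fun i _ => by ring
    rw [q1, q2, horth]
    ring
  refine ⟨fun x => ?_, ⟨?_, ?_⟩, ?_⟩
  · rw [e1 x, e2 x]
    nlinarith [hab]
  · rw [n1]; exact hw1
  · rw [n2]; exact hw2
  · rcases hor with h' | h'
    · exact Or.inl (by rw [n1]; exact h')
    · exact Or.inr (by rw [n2]; exact h')
end

section
/- Let k > 2 be an integer and define μ : [0,1] → ℝ by μ(0) = k−1 and μ(p) = (1−(1−p)^{k−1})/p for p ∈ (0,1]. Then μ is continuous on [0,1], strictly monotonically decreasing on [0,1], and maps [0,1] bijectively onto the interval [1, k−1]. -/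
/-- `μ(p)`: `k/v` times the marginal utility of competing in a battlefield of
value `v` in the `k`-player Boolean General Lotto game, when each of the other
`k−1` players independently competes with probability `p`. -/
noncomputable def muFun (k : ℕ) (p : ℝ) : ℝ :=
  if p = 0 then (k : ℝ) - 1 else (1 - (1 - p) ^ (k - 1)) / p

lemma muFun_eq_sum (k : ℕ) (hk : 1 ≤ k) (p : ℝ) :
    muFun k p = ∑ i ∈ Finset.range (k - 1), (1 - p) ^ i := by
  unfold muFun
  split_ifs with h
  · simp [h, Nat.cast_sub hk]
  · rw [div_eq_iff h]
    have := geom_sum_mul (1 - p) (k - 1)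
    nlinarith [this]

theorem stmt10 (k : ℕ) (hk : 2 < k) :
    ContinuousOn (muFun k) (Set.Icc 0 1) ∧
    StrictAntiOn (muFun k) (Set.Icc 0 1) ∧
    Set.BijOn (muFun k) (Set.Icc 0 1) (Set.Icc 1 ((k : ℝ) - 1)) := by
  have hk1 : 1 ≤ k := by omega
  have hfun : ∀ p, muFun k p = ∑ i ∈ Finset.range (k - 1), (1 - p) ^ i :=
    muFun_eq_sum k hk1
  have hzero : muFun k 0 = (k : ℝ) - 1 := by simp [muFun]
  have hone : muFun k 1 = 1 := by
    rw [hfun]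
    have : k - 1 ≠ 0 := by omega
    simp [this]
  have hcont : ContinuousOn (muFun k) (Set.Icc 0 1) := by
    have hc : Continuous fun p : ℝ => ∑ i ∈ Finset.range (k - 1), (1 - p) ^ i := by
      continuity
    exact (hc.congr (fun p => (hfun p).symm)).continuousOn
  have hanti : StrictAntiOn (muFun k) (Set.Icc 0 1) := by
    intro x hx y hy hxy
    rw [hfun, hfun]
    apply Finset.sum_lt_sum
    · intro i _
      apply pow_le_pow_left₀ (by linarith [hy.2]) (by linarith)
    · refine ⟨1, Finset.mem_range.mpr (by omega), ?_⟩
      simpa using hxy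
  refine ⟨hcont, hanti, ?_, hanti.injOn, ?_⟩
  · intro p hp
    have h1 : muFun k 1 ≤ muFun k p := by
      rcases eq_or_lt_of_le hp.2 with h | h
      · rw [h]
      · exact le_of_lt (hanti hp (by norm_num) h)
    have h2 : muFun k p ≤ muFun k 0 := by
      rcases eq_or_lt_of_le hp.1 with h | h
      · rw [← h]
      · exact le_of_lt (hanti (by norm_num) hp h)
    rw [hone] at h1; rw [hzero] at h2
    exact ⟨h1, h2⟩
  · have := intermediate_value_Icc' (by norm_num : (0:ℝ) ≤ 1) hcont
    rw [hone, hzero] at this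
    exact this
end

section
/- Let k ≥ 3 be an integer and define μ : [0,1] → ℝ by μ(0) = k−1 and μ(p) = (1−(1−p)^{k−1})/p for p ∈ (0,1]. Then for all p, q ∈ [0,1], |μ(p) − μ(q)| ≥ |p − q|; equivalently, the derivative of μ on (0,1) satisfies μ'(p) = ((1−p)^{k−2}(1+p(k−2)) − 1)/p² ≤ −1 for all p ∈ (0,1). -/
lemma aux_ineq (p : ℝ) (hp : 0 < p) (hp1 : p < 1) :
    ∀ n : ℕ, 1 ≤ n → (1 - p) ^ n * (1 + n * p) ≤ 1 - p ^ 2 := by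
  intro n hn
  induction n, hn using Nat.le_induction with
  | base => push_cast; nlinarith
  | succ n hn ih =>
    have h1 : (0:ℝ) ≤ (1 - p) ^ n := pow_nonneg (by linarith) n
    have h2 : (1 - p) * (1 + (n + 1 : ℕ) * p) ≤ 1 + n * p := by
      push_cast
      nlinarith
    calc (1 - p) ^ (n + 1) * (1 + (n + 1 : ℕ) * p)
        = (1 - p) ^ n * ((1 - p) * (1 + (n + 1 : ℕ) * p)) := by ring
      _ ≤ (1 - p) ^ n * (1 + n * p) := by
          exact mul_le_mul_of_nonneg_left h2 h1
      _ ≤ 1 - p ^ 2 := ih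

theorem stmt11 (k : ℕ) (hk : 3 ≤ k) :
    (∀ p ∈ Set.Icc (0 : ℝ) 1, ∀ q ∈ Set.Icc (0 : ℝ) 1,
      |p - q| ≤ |muFun k p - muFun k q|) ∧
    (∀ p ∈ Set.Ioo (0 : ℝ) 1,
      deriv (muFun k) p = ((1 - p) ^ (k - 2) * (1 + p * ((k : ℝ) - 2)) - 1) / p ^ 2 ∧
      deriv (muFun k) p ≤ -1) := by
  have hk1 : 1 ≤ k := by omega
  -- monotone difference bound
  have key : ∀ p ∈ Set.Icc (0 : ℝ) 1, ∀ q ∈ Set.Icc (0 : ℝ) 1, p ≤ q →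
      q - p ≤ muFun k p - muFun k q := by
    intro p hp q hq hpq
    rw [muFun_eq_sum k hk1, muFun_eq_sum k hk1, ← Finset.sum_sub_distrib]
    have hnonneg : ∀ i ∈ Finset.range (k - 1), 0 ≤ (1 - p) ^ i - (1 - q) ^ i := by
      intro i _
      have : (1 - q) ^ i ≤ (1 - p) ^ i :=
        pow_le_pow_left₀ (by linarith [hq.2]) (by linarith) i
      linarith
    have h1mem : 1 ∈ Finset.range (k - 1) := by
      simp only [Finset.mem_range]; omega
    have := Finset.single_le_sum hnonneg h1mem
    simpa using this
  constructor
  · intro p hp q hq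
    rcases le_total p q with h | h
    · have := key p hp q hq h
      rw [abs_sub_comm p q, abs_of_nonneg (by linarith)]
      calc q - p ≤ muFun k p - muFun k q := this
        _ ≤ |muFun k p - muFun k q| := le_abs_self _
    · have := key q hq p hp h
      rw [abs_of_nonneg (by linarith), abs_sub_comm]
      calc p - q ≤ muFun k q - muFun k p := this
        _ ≤ |muFun k q - muFun k p| := le_abs_self _
  · intro p hp
    obtain ⟨hp0, hp1⟩ := hp
    have hpne : p ≠ 0 := ne_of_gt hp0
    -- derivative of the explicit quotient
    have h0 : HasDerivAt (fun x : ℝ => 1 - x) (-1) p := by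
      simpa using (hasDerivAt_id p).const_sub 1
    have h1 : HasDerivAt (fun x : ℝ => (1 - x) ^ (k - 1))
        ((k - 1 : ℕ) * (1 - p) ^ (k - 1 - 1) * (-1)) p := h0.pow (k - 1)
    have h2 : HasDerivAt (fun x : ℝ => 1 - (1 - x) ^ (k - 1))
        (-((k - 1 : ℕ) * (1 - p) ^ (k - 1 - 1) * (-1))) p := h1.const_sub 1
    have h3 : HasDerivAt (fun x : ℝ => (1 - (1 - x) ^ (k - 1)) / x)
        ((-((k - 1 : ℕ) * (1 - p) ^ (k - 1 - 1) * (-1)) * p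
          - (1 - (1 - p) ^ (k - 1)) * 1) / p ^ 2) p :=
      h2.div (hasDerivAt_id p) hpne
    have heq : muFun k =ᶠ[nhds p] (fun x : ℝ => (1 - (1 - x) ^ (k - 1)) / x) := by
      filter_upwards [IsOpen.mem_nhds isOpen_ne (show p ∈ {x : ℝ | x ≠ 0} from hpne)]
        with x hx
      simp [muFun, hx]
    have h4 : HasDerivAt (muFun k)
        ((-((k - 1 : ℕ) * (1 - p) ^ (k - 1 - 1) * (-1)) * p
          - (1 - (1 - p) ^ (k - 1)) * 1) / p ^ 2) p :=
      HasDerivAt.congr_of_eventuallyEq h3 heq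
    have hD : deriv (muFun k) p
        = ((1 - p) ^ (k - 2) * (1 + p * ((k : ℝ) - 2)) - 1) / p ^ 2 := by
      rw [h4.deriv]
      congr 1
      have hk11 : k - 1 - 1 = k - 2 := by omega
      have hk12 : k - 1 = (k - 2) + 1 := by omega
      rw [hk11, hk12, pow_succ]
      push_cast [Nat.cast_sub (show 2 ≤ k by omega)]
      ring
    refine ⟨hD, ?_⟩
    rw [hD]
    have hcast : ((k - 2 : ℕ) : ℝ) = (k : ℝ) - 2 := by
      push_cast [Nat.cast_sub (by omega : 2 ≤ k)]; ring
    have haux := aux_ineq p hp0 hp1 (k - 2) (by omega)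
    rw [hcast] at haux
    rw [div_le_iff₀ (by positivity)]
    nlinarith [haux]
end

section
/- Let k ≥ 3 be an integer, let v_1 ≥ v_2 ≥ … ≥ v_n > 0, and let B be an integer with 0 ≤ B ≤ n. With p*_j = m_{v_j}^{-1}(x*) for each j ∈ [n], we have Σ_{j=1}^n p*_j = B, and for every q ∈ [0,1]^n with Σ_{j=1}^n q_j ≤ B, Σ_{j=1}^n [q_j·u_1(p*_j, v_j) + (1−q_j)·u_0(p*_j, v_j)] ≤ Σ_{j=1}^n [p*_j·u_1(p*_j, v_j) + (1−p*_j)·u_0(p*_j, v_j)]. That is, (p*_1,…,p*_n) is a symmetric Nash equilibrium of the Boolean-valued General Lotto game: no player can improve her expected utility by unilaterally deviating to another vector of competition probabilities meeting the expected budget constraint. -/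
open Topology Filter


/-- Marginal utility `m_v(p)` of competing in a battlefield of value `v` in the
`k`-player Boolean General Lotto game, when each of the other `k−1` players
independently competes with probability `p`. -/
noncomputable def mMarg (k : ℕ) (v p : ℝ) : ℝ :=
  if p = 0 then ((k : ℝ) - 1) * v / k else (v / k) * ((1 - (1 - p) ^ (k - 1)) / p)

/-- Expected share of a value-`v` battlefield from *not* competing. -/
noncomputable def u0 (k : ℕ) (p v : ℝ) : ℝ := (v / k) * (1 - p) ^ (k - 1)

/-- Expected share of a value-`v` battlefield from competing. -/
noncomputable def u1 (k : ℕ) (p v : ℝ) : ℝ :=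
  v * ∑ t ∈ Finset.range k,
    ((k - 1).choose t : ℝ) * p ^ t * (1 - p) ^ (k - 1 - t) / ((t : ℝ) + 1)

lemma mMarg_eq_geom (k : ℕ) (hk : 1 ≤ k) (v p : ℝ) :
    mMarg k v p = (v / k) * ∑ i ∈ Finset.range (k - 1), (1 - p) ^ i := by
  unfold mMarg
  rcases eq_or_ne p 0 with h | h
  · subst h
    rw [if_pos rfl]
    simp only [sub_zero, one_pow, Finset.sum_const, Finset.card_range, nsmul_eq_mul, mul_one]
    rw [Nat.cast_sub hk]; push_cast; ring
  · rw [if_neg h]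
    congr 1
    rw [div_eq_iff h]
    linear_combination geom_sum_mul (1 - p) (k - 1)

lemma mMarg_zero (k : ℕ) (v : ℝ) : mMarg k v 0 = ((k : ℝ) - 1) * v / k := by simp [mMarg]

lemma mMarg_one (k : ℕ) (hk : 2 ≤ k) (v : ℝ) : mMarg k v 1 = v / k := by
  rw [mMarg, if_neg one_ne_zero, sub_self, zero_pow (by omega : k - 1 ≠ 0)]; norm_num

lemma mMarg_continuous (k : ℕ) (hk : 1 ≤ k) (v : ℝ) : Continuous (mMarg k v) := by
  have : mMarg k v = fun p => (v / k) * ∑ i ∈ Finset.range (k - 1), (1 - p) ^ i :=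
    funext (mMarg_eq_geom k hk v)
  rw [this]
  exact continuous_const.mul (continuous_finset_sum _ (fun i _ => (by fun_prop)))

lemma mMarg_strictAntiOn (k : ℕ) (hk : 3 ≤ k) (v : ℝ) (hv : 0 < v) :
    StrictAntiOn (mMarg k v) (Set.Icc 0 1) := by
  intro x hx y hy hxy
  rw [mMarg_eq_geom k (by omega) v, mMarg_eq_geom k (by omega) v]
  have hvk : 0 < v / k := div_pos hv (by positivity)
  apply mul_lt_mul_of_pos_left _ hvk
  apply Finset.sum_lt_sum
  · intro i _
    exact pow_le_pow_left₀ (by linarith [hy.2]) (by linarith) i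
  · refine ⟨1, Finset.mem_range.2 (by omega), ?_⟩
    simpa using by linarith

lemma mMarg_surjOn (k : ℕ) (hk : 3 ≤ k) (v : ℝ) :
    ∀ x ∈ Set.Icc (v / k) (((k : ℝ) - 1) * v / k),
      ∃ p ∈ Set.Icc (0 : ℝ) 1, mMarg k v p = x := by
  intro x hx
  have h := intermediate_value_Icc' (by norm_num : (0:ℝ) ≤ 1)
    ((mMarg_continuous k (by omega) v).continuousOn)
  rw [mMarg_one k (by omega), mMarg_zero k] at h
  obtain ⟨p, hp, hpx⟩ := h hx
  exact ⟨p, hp, hpx⟩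

/-- An antitone function onto a closed interval is continuous. -/
lemma continuous_of_antitone_surjOn {f : ℝ → ℝ} {c d : ℝ} (hf : Antitone f)
    (hmem : ∀ x, f x ∈ Set.Icc c d) (hsurj : ∀ y ∈ Set.Icc c d, ∃ x, f x = y) :
    Continuous f := by
  set F : ℝ → (Set.Icc c d)ᵒᵈ := fun x => OrderDual.toDual (⟨f x, hmem x⟩ : Set.Icc c d) with hF
  have hmono : Monotone F := by
    intro x y hxy
    show OrderDual.toDual _ ≤ OrderDual.toDual _
    rw [OrderDual.toDual_le_toDual, Subtype.mk_le_mk]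
    exact hf hxy
  have hsurjF : Function.Surjective F := by
    intro y
    obtain ⟨x, hx⟩ := hsurj (OrderDual.ofDual y : Set.Icc c d) (OrderDual.ofDual y).2
    refine ⟨x, ?_⟩
    show OrderDual.toDual _ = y
    rw [show y = OrderDual.toDual (OrderDual.ofDual y) from rfl]
    congr 1
    exact Subtype.ext hx
  have hcF : Continuous F := hmono.continuous_of_surjective hsurjF
  exact (continuous_subtype_val.comp hcF : _)

lemma u1_sub_u0 (k : ℕ) (hk : 3 ≤ k) (p v : ℝ) :
    u1 k p v - u0 k p v = mMarg k v p := by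
  have hkpos : (0:ℝ) < k := by positivity
  have hkne : (k:ℝ) ≠ 0 := ne_of_gt hkpos
  rcases eq_or_ne p 0 with hp | hp
  · subst hp
    have hsum : ∑ t ∈ Finset.range k,
        ((k - 1).choose t : ℝ) * (0:ℝ) ^ t * (1 - 0) ^ (k - 1 - t) / ((t : ℝ) + 1) = 1 := by
      rw [Finset.sum_eq_single_of_mem 0 (Finset.mem_range.2 (by omega))]
      · norm_num
      · intro t _ ht
        rw [zero_pow ht]
        ring
    rw [u1, u0, mMarg, if_pos rfl, hsum]
    field_simp
    ring
  · have key : (∑ t ∈ Finset.range k,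
        ((k - 1).choose t : ℝ) * p ^ t * (1 - p) ^ (k - 1 - t) / ((t : ℝ) + 1)) * ((k:ℝ) * p)
        = 1 - (1 - p) ^ k := by
      rw [Finset.sum_mul]
      have step : ∀ t ∈ Finset.range k,
          ((k - 1).choose t : ℝ) * p ^ t * (1 - p) ^ (k - 1 - t) / ((t : ℝ) + 1) * ((k:ℝ) * p)
          = p ^ (t+1) * (1 - p) ^ (k - (t+1)) * (k.choose (t+1) : ℝ) := by
        intro t ht
        have hc : (k:ℝ) * ((k-1).choose t : ℝ) = (k.choose (t+1) : ℝ) * ((t:ℝ) + 1) := by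
          have h1 := Nat.add_one_mul_choose_eq (k-1) t
          have h2 : (k-1) + 1 = k := by omega
          rw [h2] at h1
          exact_mod_cast congrArg (Nat.cast : ℕ → ℝ) h1
        have hmt : k - (t+1) = k - 1 - t := by omega
        rw [hmt, div_mul_eq_mul_div, div_eq_iff (by positivity : ((t:ℝ) + 1) ≠ 0)]
        linear_combination (p ^ t * p * (1 - p) ^ (k - 1 - t)) * hc
      rw [Finset.sum_congr rfl step]
      have hbin : ∑ i ∈ Finset.range (k + 1), p ^ i * (1 - p) ^ (k - i) * (k.choose i : ℝ)
          = (1:ℝ) := by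
        have := add_pow p (1 - p) k
        simpa using this.symm
      rw [Finset.sum_range_succ'] at hbin
      simp only [pow_zero, Nat.sub_zero, Nat.choose_zero_right, Nat.cast_one, one_mul,
        mul_one] at hbin
      linarith [hbin]
    rw [u1, u0, mMarg, if_neg hp]
    have hk1 : (1 - p) ^ k = (1 - p) ^ (k - 1) * (1 - p) := by
      conv_lhs => rw [show k = (k - 1) + 1 from by omega]
      rw [pow_succ]
    rw [hk1] at key
    set S := ∑ t ∈ Finset.range k,
        ((k - 1).choose t : ℝ) * p ^ t * (1 - p) ^ (k - 1 - t) / ((t : ℝ) + 1) with hS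
    field_simp
    linear_combination v * key

theorem stmt13 (k n : ℕ) (hk : 3 ≤ k) (B : ℕ) (hB : B ≤ n)
    (v : Fin n → ℝ) (hv : ∀ j, 0 < v j)
    (hsorted : ∀ i j : Fin n, i ≤ j → v j ≤ v i)
    -- `minv j` is the extended inverse `m_{v_j}^{-1} : ℝ → [0,1]`:
    (minv : Fin n → ℝ → ℝ)
    (hminv_inv : ∀ j, ∀ p ∈ Set.Icc (0 : ℝ) 1, minv j (mMarg k (v j) p) = p)
    (hminv_lo : ∀ j, ∀ x : ℝ, x < v j / k → minv j x = 1)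
    (hminv_hi : ∀ j, ∀ x : ℝ, ((k : ℝ) - 1) * v j / k < x → minv j x = 0)
    -- `x* = inf {x : Σ_j m_{v_j}^{-1}(x) ≤ B}` and `p*_j = m_{v_j}^{-1}(x*)`:
    (xstar : ℝ) (hxstar : xstar = sInf {x : ℝ | ∑ j, minv j x ≤ (B : ℝ)})
    (pstar : Fin n → ℝ) (hpstar : ∀ j, pstar j = minv j xstar) :
    ∑ j, pstar j = (B : ℝ) ∧
    ∀ q : Fin n → ℝ, (∀ j, q j ∈ Set.Icc (0 : ℝ) 1) → ∑ j, q j ≤ (B : ℝ) →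
      ∑ j, (q j * u1 k (pstar j) (v j) + (1 - q j) * u0 k (pstar j) (v j)) ≤
        ∑ j, (pstar j * u1 k (pstar j) (v j) + (1 - pstar j) * u0 k (pstar j) (v j)) := by
  have hk0R : (0:ℝ) < k := by exact_mod_cast (by omega : 0 < k)
  have hmem : ∀ j x, minv j x ∈ Set.Icc (0:ℝ) 1 := by
    intro j x
    rcases lt_or_ge x (v j / k) with h | h
    · rw [hminv_lo j x h]; exact ⟨zero_le_one, le_refl 1⟩
    · rcases le_or_gt x (((k:ℝ) - 1) * v j / k) with h2 | h2
      · obtain ⟨p, hp, hpx⟩ := mMarg_surjOn k hk (v j) x ⟨h, h2⟩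
        rw [← hpx, hminv_inv j p hp]; exact hp
      · rw [hminv_hi j x h2]; exact ⟨le_refl 0, zero_le_one⟩
  have hanti : ∀ j, Antitone (minv j) := by
    intro j x y hxy
    rcases lt_or_ge y (v j / k) with hy | hy
    · rw [hminv_lo j y hy, hminv_lo j x (lt_of_le_of_lt hxy hy)]
    · rcases lt_or_ge (((k:ℝ) - 1) * v j / k) x with hx | hx
      · rw [hminv_hi j x hx, hminv_hi j y (lt_of_lt_of_le hx hxy)]
      · rcases lt_or_ge x (v j / k) with hx2 | hx2
        · rw [hminv_lo j x hx2]; exact (hmem j y).2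
        · rcases lt_or_ge (((k:ℝ) - 1) * v j / k) y with hy2 | hy2
          · rw [hminv_hi j y hy2]; exact (hmem j x).1
          · obtain ⟨p, hp, hpx⟩ := mMarg_surjOn k hk (v j) x ⟨hx2, hx⟩
            obtain ⟨p', hp', hpy⟩ := mMarg_surjOn k hk (v j) y ⟨hy, hy2⟩
            rw [← hpx, hminv_inv j p hp, ← hpy, hminv_inv j p' hp']
            by_contra hcon
            push_neg at hcon
            have := mMarg_strictAntiOn k hk (v j) (hv j) hp hp' hcon
            rw [hpx, hpy] at this
            linarith
  have hcontm : ∀ j, Continuous (minv j) := by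
    intro j
    refine continuous_of_antitone_surjOn (hanti j) (hmem j) ?_
    intro y hy
    exact ⟨mMarg k (v j) y, hminv_inv j y hy⟩
  have hfc : Continuous fun x => ∑ j, minv j x :=
    continuous_finset_sum _ (fun j _ => hcontm j)
  set S : Set ℝ := {x : ℝ | ∑ j, minv j x ≤ (B : ℝ)} with hSdef
  have main : (∑ j, pstar j = (B:ℝ)) ∧ 0 ≤ xstar := by
    by_cases hBn : B = n
    · have hall : ∀ x : ℝ, ∑ j, minv j x ≤ (B:ℝ) := by
        intro x
        calc ∑ j, minv j x ≤ ∑ _j : Fin n, (1:ℝ) :=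
              Finset.sum_le_sum (fun j _ => (hmem j x).2)
          _ = n := by simp
          _ = B := by rw [hBn]
      have hSuniv : S = Set.univ := Set.eq_univ_of_forall hall
      have hx0 : xstar = 0 := by
        rw [hxstar, hSuniv]
        apply Real.sInf_of_not_bddBelow
        rintro ⟨c, hc⟩
        have := hc (Set.mem_univ (c - 1))
        linarith
      constructor
      · have h1 : ∀ j, pstar j = 1 := fun j => by
          rw [hpstar j, hx0]
          exact hminv_lo j 0 (div_pos (hv j) hk0R)
        rw [Finset.sum_congr rfl (fun j _ => h1 j)]
        simp [hBn]
      · rw [hx0]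
    · have hBn' : B < n := lt_of_le_of_ne hB hBn
      have hn : 0 < n := by omega
      set last : Fin n := ⟨n - 1, by omega⟩ with hlast
      have hc : ∀ j, v last / k ≤ v j / k := by
        intro j
        have : v last ≤ v j := hsorted j last (by
          rw [Fin.le_def]
          simp only [hlast]
          omega)
        gcongr
      have hlb : ∀ s ∈ S, v last / k ≤ s := by
        intro s hs
        by_contra hcon
        push_neg at hcon
        have h1 : ∀ j, minv j s = 1 := fun j => hminv_lo j s (lt_of_lt_of_le hcon (hc j))
        have h2 : ∑ j, minv j s = (n:ℝ) := by
          rw [Finset.sum_congr rfl fun j _ => h1 j]; simp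
        have hs' : (n:ℝ) ≤ (B:ℝ) := h2 ▸ hs
        exact absurd (Nat.cast_le.mp hs') (by omega)
      have hne : S.Nonempty := by
        refine ⟨((k:ℝ) - 1) * v ⟨0, hn⟩ / k + 1, ?_⟩
        have h0 : ∀ j, minv j (((k:ℝ) - 1) * v ⟨0, hn⟩ / k + 1) = 0 := by
          intro j
          apply hminv_hi
          have hvj : v j ≤ v ⟨0, hn⟩ := hsorted ⟨0, hn⟩ j (by simp [Fin.le_def])
          have : ((k:ℝ) - 1) * v j / k ≤ ((k:ℝ) - 1) * v ⟨0, hn⟩ / k := by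
            gcongr
            · have : (3:ℝ) ≤ (k:ℝ) := by exact_mod_cast hk
              linarith
          linarith
        show ∑ j, minv j _ ≤ (B:ℝ)
        rw [Finset.sum_congr rfl fun j _ => h0 j]
        simp
      have hclosed : IsClosed S := IsClosed.preimage hfc isClosed_Iic
      have hxmem : xstar ∈ S := by
        rw [hxstar]
        exact hclosed.csInf_mem hne ⟨_, hlb⟩
      have hxlb : v last / k ≤ xstar := by
        rw [hxstar]
        exact le_csInf hne hlb
      have hx0 : 0 ≤ xstar := le_trans (le_of_lt (div_pos (hv last) hk0R)) hxlb
      have hge : (B:ℝ) ≤ ∑ j, minv j xstar := by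
        by_contra hcon
        push_neg at hcon
        have hev : ∀ᶠ y in 𝓝 xstar, (∑ j, minv j y) < (B:ℝ) :=
          hfc.continuousAt.eventually_lt_const hcon
        have hev2 : ∀ᶠ y in 𝓝[<] xstar, (∑ j, minv j y) < (B:ℝ) :=
          hev.filter_mono nhdsWithin_le_nhds
        obtain ⟨y, hy1, hy2⟩ := (hev2.and self_mem_nhdsWithin).exists
        have : xstar ≤ y := by
          rw [hxstar]
          exact csInf_le ⟨_, hlb⟩ (le_of_lt hy1)
        exact absurd this (not_le.2 hy2)
      have heq : ∑ j, minv j xstar = (B:ℝ) := le_antisymm hxmem hge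
      refine ⟨?_, hx0⟩
      rw [Finset.sum_congr rfl fun j _ => hpstar j]
      exact heq
  obtain ⟨hsum, hx0⟩ := main
  refine ⟨hsum, ?_⟩
  intro q hq hqB
  have key : ∀ j, (q j - pstar j) * mMarg k (v j) (pstar j) ≤ (q j - pstar j) * xstar := by
    intro j
    rcases lt_or_ge xstar (v j / k) with h | h
    · have hp1 : pstar j = 1 := by rw [hpstar j]; exact hminv_lo j xstar h
      rw [hp1, mMarg_one k (by omega)]
      exact mul_le_mul_of_nonpos_left (le_of_lt h) (by linarith [(hq j).2])
    · rcases le_or_gt xstar (((k:ℝ) - 1) * v j / k) with h2 | h2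
      · obtain ⟨p, hp, hpx⟩ := mMarg_surjOn k hk (v j) xstar ⟨h, h2⟩
        have hpe : pstar j = p := by rw [hpstar j, ← hpx, hminv_inv j p hp]
        rw [hpe, hpx]
      · have hp0 : pstar j = 0 := by rw [hpstar j]; exact hminv_hi j xstar h2
        rw [hp0, mMarg_zero k]
        simp only [sub_zero]
        exact mul_le_mul_of_nonneg_left (le_of_lt h2) (hq j).1
  have h5 : ∑ j, (q j * u1 k (pstar j) (v j) + (1 - q j) * u0 k (pstar j) (v j))
      - ∑ j, (pstar j * u1 k (pstar j) (v j) + (1 - pstar j) * u0 k (pstar j) (v j))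
      = ∑ j, (q j - pstar j) * mMarg k (v j) (pstar j) := by
    rw [← Finset.sum_sub_distrib]
    refine Finset.sum_congr rfl fun j _ => ?_
    linear_combination (q j - pstar j) * u1_sub_u0 k hk (pstar j) (v j)
  have h2 : ∑ j, ((q j - pstar j) * mMarg k (v j) (pstar j)) ≤ ∑ j, (q j - pstar j) * xstar :=
    Finset.sum_le_sum fun j _ => key j
  have h3 : ∑ j, (q j - pstar j) * xstar = (∑ j, q j - (B:ℝ)) * xstar := by
    rw [← Finset.sum_mul, Finset.sum_sub_distrib, hsum]
  have h4 : (∑ j, q j - (B:ℝ)) * xstar ≤ 0 :=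
    mul_nonpos_of_nonpos_of_nonneg (by linarith) hx0
  linarith
end

section
/- Let n ≥ 1 and let p_1,…,p_n ∈ [0,1] satisfy Σ_{j=1}^n p_j = B for some nonnegative integer B. Then there exists a probability measure on {0,1}^n such that the j-th coordinate A_j equals 1 with probability exactly p_j for every j ∈ [n], and Σ_{j=1}^n A_j = B holds almost surely. Concretely, setting α_j = Σ_{j'<j} p_{j'} and drawing β uniformly from [0,1], the vector defined by A_j = 1 if and only if there exists an integer m with β + m ∈ [α_j, α_j + p_j) has these two properties. -/
open MeasureTheory

namespace CouplingAux
variable {n : ℕ} (p : Fin n → ℝ)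

noncomputable def S (k : ℕ) : ℝ :=
  ∑ j ∈ Finset.univ.filter (fun j : Fin n => (j : ℕ) < k), p j

lemma S_val (j : Fin n) : S p j.val = ∑ j' ∈ Finset.Iio j, p j' := by
  apply Finset.sum_congr _ (fun _ _ => rfl)
  ext j'
  simp only [Finset.mem_filter, Finset.mem_univ, true_and, Finset.mem_Iio, Fin.lt_def]

lemma S_succ (j : Fin n) : S p (j.val + 1) = S p j.val + p j := by
  unfold S
  rw [show Finset.univ.filter (fun j' : Fin n => (j' : ℕ) < j.val + 1)
      = insert j (Finset.univ.filter (fun j' : Fin n => (j' : ℕ) < j.val)) by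
    ext j'; simp [Fin.ext_iff]; omega]
  rw [Finset.sum_insert (by simp), add_comm]

lemma S_mono (hp : ∀ j, p j ∈ Set.Icc (0:ℝ) 1) {k l : ℕ} (h : k ≤ l) : S p k ≤ S p l := by
  apply Finset.sum_le_sum_of_subset_of_nonneg
  · intro j; simp only [Finset.mem_filter, Finset.mem_univ, true_and]; omega
  · exact fun j _ _ => (hp j).1

lemma S_zero : S p 0 = 0 := by simp [S]

lemma S_top : S p n = ∑ j, p j := by
  unfold S
  apply Finset.sum_congr _ (fun _ _ => rfl)
  ext j'; simp [j'.isLt]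

lemma exists_unique_j (hp : ∀ j, p j ∈ Set.Icc (0:ℝ) 1) {B : ℕ}
    (hsum : ∑ j, p j = (B : ℝ)) {x : ℝ} (hx0 : 0 ≤ x) (hxB : x < (B : ℝ)) :
    ∃! j : Fin n, S p j.val ≤ x ∧ x < S p j.val + p j := by
  have hn : 0 < n := by
    rcases Nat.eq_zero_or_pos n with h | h
    · exfalso; subst h; simp at hsum; rw [← hsum] at hxB; linarith
    · exact h
  have hSn : S p n = (B : ℝ) := by rw [S_top, hsum]
  set T : Finset (Fin n) := Finset.univ.filter (fun j : Fin n => S p j.val ≤ x) with hT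
  have hTne : T.Nonempty := by
    refine ⟨⟨0, hn⟩, ?_⟩
    simp only [hT, Finset.mem_filter, Finset.mem_univ, true_and]
    show S p ((⟨0, hn⟩ : Fin n) : ℕ) ≤ x
    rw [show ((⟨0, hn⟩ : Fin n) : ℕ) = 0 from rfl, S_zero]; exact hx0
  set j := T.max' hTne with hj
  have hjmem : j ∈ T := T.max'_mem hTne
  have hjle : S p j.val ≤ x := by
    simpa only [hT, Finset.mem_filter, Finset.mem_univ, true_and] using hjmem
  have hjlt : x < S p j.val + p j := by
    rw [← S_succ]
    by_contra hcon
    push_neg at hcon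
    rcases lt_or_eq_of_le (Nat.succ_le_of_lt j.isLt) with h | (h : j.val + 1 = n)
    · have hmem : (⟨j.val + 1, h⟩ : Fin n) ∈ T := by
        simp only [hT, Finset.mem_filter, Finset.mem_univ, true_and]
        exact hcon
      have := T.le_max' _ hmem
      rw [← hj] at this
      have : j.val + 1 ≤ j.val := by exact_mod_cast this
      omega
    · rw [h, hSn] at hcon; linarith
  refine ⟨j, ⟨hjle, hjlt⟩, ?_⟩
  rintro j' ⟨h1, h2⟩
  by_contra hne
  rcases lt_or_gt_of_ne (fun h => hne (by exact h)) with h | h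
  · have : S p (j'.val + 1) ≤ S p j.val := S_mono p hp (by omega)
    rw [S_succ] at this
    linarith
  · have : S p (j.val + 1) ≤ S p j'.val := S_mono p hp (by omega)
    rw [S_succ] at this
    linarith

open Classical in
lemma count_eq (hp : ∀ j, p j ∈ Set.Icc (0:ℝ) 1) {B : ℕ}
    (hsum : ∑ j, p j = (B : ℝ)) (β : ℝ) :
    ∑ j, (if ∃ m : ℤ, S p j.val ≤ β + m ∧ β + m < S p j.val + p j then (1:ℕ) else 0)
      = B := by
  have hb0 : 0 ≤ Int.fract β := Int.fract_nonneg β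
  have hb1 : Int.fract β < 1 := Int.fract_lt_one β
  have hfr : β = ⌊β⌋ + Int.fract β := by rw [Int.fract]; ring
  have hSn : S p n = (B : ℝ) := by rw [S_top, hsum]
  have hstep : ∀ j : Fin n,
      (if ∃ m : ℤ, S p j.val ≤ β + m ∧ β + m < S p j.val + p j then (1:ℕ) else 0)
      = ∑ m ∈ Finset.range B,
          (if S p j.val ≤ Int.fract β + m ∧ Int.fract β + m < S p j.val + p j
           then (1:ℕ) else 0) := by
    intro j
    have hS0 : (0:ℝ) ≤ S p j.val := by rw [← S_zero (p := p)]; exact S_mono p hp (Nat.zero_le _)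
    have hSB : S p j.val + p j ≤ (B:ℝ) := by
      rw [← S_succ, ← hSn]; exact S_mono p hp j.isLt
    rw [← Finset.card_filter]
    by_cases hc : ∃ m : ℤ, S p j.val ≤ β + m ∧ β + m < S p j.val + p j
    · rw [if_pos hc]
      obtain ⟨m, hm1, hm2⟩ := hc
      set m' : ℤ := m + ⌊β⌋ with hm'
      have he : Int.fract β + (m' : ℝ) = β + m := by push_cast [hm']; linarith [hfr]
      have hm'0 : 0 ≤ m' := by
        by_contra hcon
        push_neg at hcon
        have hm1' : m' ≤ -1 := by omega
        have : (m' : ℝ) ≤ -1 := by exact_mod_cast hm1'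
        have : β + m ≤ Int.fract β - 1 := by linarith [he]
        linarith
      have hm'B : m' < (B : ℤ) := by
        by_contra hcon
        push_neg at hcon
        have : (B : ℝ) ≤ (m' : ℝ) := by exact_mod_cast hcon
        have : (B:ℝ) ≤ β + m := by linarith [he]
        linarith
      have hmem : m'.toNat ∈ Finset.range B := by
        rw [Finset.mem_range]; omega
      have hcast : ((m'.toNat : ℕ) : ℝ) = (m' : ℝ) := by exact_mod_cast Int.toNat_of_nonneg hm'0
      have hfilter : (Finset.range B).filter
          (fun m : ℕ => S p j.val ≤ Int.fract β + (m:ℝ) ∧ Int.fract β + (m:ℝ) < S p j.val + p j)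
          = ({m'.toNat} : Finset ℕ) := by
        ext k
        simp only [Finset.mem_filter, Finset.mem_range, Finset.mem_singleton]
        constructor
        · rintro ⟨hk, hk1, hk2⟩
          have h1 : S p j.val ≤ Int.fract β + (m'.toNat : ℝ) := by rw [hcast, he]; exact hm1
          have h2 : Int.fract β + (m'.toNat : ℝ) < S p j.val + p j := by rw [hcast, he]; exact hm2
          have hpj1 : p j ≤ 1 := (hp j).2
          have d1 : (k : ℝ) - (m'.toNat : ℝ) < 1 := by linarith
          have d2 : (m'.toNat : ℝ) - (k : ℝ) < 1 := by linarith
          have : (k : ℤ) = (m'.toNat : ℤ) := by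
            have e1 : ((k:ℤ):ℝ) - ((m'.toNat:ℤ):ℝ) < 1 := by push_cast; push_cast at d1; linarith
            have e2 : ((m'.toNat:ℤ):ℝ) - ((k:ℤ):ℝ) < 1 := by push_cast; push_cast at d2; linarith
            have f1 : (k:ℤ) - (m'.toNat:ℤ) < 1 := by exact_mod_cast e1
            have f2 : (m'.toNat:ℤ) - (k:ℤ) < 1 := by exact_mod_cast e2
            omega
          exact_mod_cast this
        · rintro rfl
          refine ⟨by omega, by rw [hcast, he]; exact hm1, by rw [hcast, he]; exact hm2⟩
      rw [hfilter, Finset.card_singleton]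
    · rw [if_neg hc]
      symm
      rw [Finset.card_eq_zero, Finset.filter_eq_empty_iff]
      rintro k hk ⟨h1, h2⟩
      exact hc ⟨k - ⌊β⌋, by push_cast; constructor <;> linarith [hfr, h1, h2]⟩
  calc ∑ j, (if ∃ m : ℤ, S p j.val ≤ β + m ∧ β + m < S p j.val + p j then (1:ℕ) else 0)
      = ∑ j, ∑ m ∈ Finset.range B,
          (if S p j.val ≤ Int.fract β + m ∧ Int.fract β + m < S p j.val + p j
           then (1:ℕ) else 0) := Finset.sum_congr rfl (fun j _ => hstep j)
    _ = ∑ m ∈ Finset.range B, ∑ j,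
          (if S p j.val ≤ Int.fract β + m ∧ Int.fract β + m < S p j.val + p j
           then (1:ℕ) else 0) := Finset.sum_comm
    _ = ∑ m ∈ Finset.range B, 1 := by
        apply Finset.sum_congr rfl
        intro m hm
        rw [Finset.mem_range] at hm
        have hx0 : (0:ℝ) ≤ Int.fract β + m := by positivity
        have hxB : Int.fract β + m < (B : ℝ) := by
          have : (m:ℝ) + 1 ≤ (B:ℝ) := by exact_mod_cast hm
          linarith
        obtain ⟨j0, hj0, huniq⟩ := exists_unique_j p hp hsum hx0 hxB
        rw [← Finset.card_filter]
        rw [show Finset.univ.filter (fun j : Fin n =>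
            S p j.val ≤ Int.fract β + m ∧ Int.fract β + m < S p j.val + p j) = {j0} by
          ext j
          simp only [Finset.mem_filter, Finset.mem_univ, true_and, Finset.mem_singleton]
          exact ⟨fun h => huniq j h, fun h => h ▸ hj0⟩]
        exact Finset.card_singleton j0
    _ = B := by simp

open Classical in
lemma key_measure (α q : ℝ) (hq1 : q ≤ 1) :
    volume ({β | ∃ m : ℤ, α ≤ β + m ∧ β + m < α + q} ∩ Set.Ico (0:ℝ) 1)
      = ENNReal.ofReal q := by
  set a := Int.fract α with ha
  have ha0 : 0 ≤ a := Int.fract_nonneg α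
  have ha1 : a < 1 := Int.fract_lt_one α
  have hfl : α = ⌊α⌋ + a := by rw [ha, Int.fract]; ring
  have hset : {β | ∃ m : ℤ, α ≤ β + m ∧ β + m < α + q} ∩ Set.Ico (0:ℝ) 1
      = Set.Ico a (min (a + q) 1) ∪ Set.Ico 0 (a + q - 1) := by
    ext β
    simp only [Set.mem_inter_iff, Set.mem_setOf_eq, Set.mem_Ico, Set.mem_union,
      lt_min_iff]
    constructor
    · rintro ⟨⟨m, h1, h2⟩, hβ0, hβ1⟩
      set k : ℤ := m - ⌊α⌋ with hk
      have hk1 : a ≤ β + k := by push_cast [hk]; linarith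
      have hk2 : β + k < a + q := by push_cast [hk]; linarith
      have hkl : (-1 : ℝ) < (k : ℝ) := by linarith
      have hku : (k : ℝ) < 2 := by linarith
      have hkl' : (-1 : ℤ) < k := by exact_mod_cast hkl
      have hku' : k < 2 := by exact_mod_cast hku
      interval_cases k
      · left; push_cast at hk1 hk2; constructor <;> [linarith; constructor <;> linarith]
      · right; push_cast at hk1 hk2; constructor <;> linarith
    · rintro (⟨h1, h2, h3⟩ | ⟨h1, h2⟩)
      · refine ⟨⟨⌊α⌋, by linarith, by linarith⟩, by linarith, h3⟩
      · refine ⟨⟨⌊α⌋ + 1, by push_cast; linarith, by push_cast; linarith⟩,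
          h1, by linarith⟩
  rw [hset, measure_union ?_ measurableSet_Ico]
  · rw [Real.volume_Ico, Real.volume_Ico]
    rcases le_or_gt (a + q) 1 with h | h
    · rw [min_eq_left h]
      have : ENNReal.ofReal (a + q - 1 - 0) = 0 := by
        rw [ENNReal.ofReal_eq_zero]; linarith
      rw [this, add_zero]; ring_nf
    · rw [min_eq_right h.le]
      rw [← ENNReal.ofReal_add (by linarith) (by linarith)]
      ring_nf
  · rw [Set.disjoint_left]
    rintro x ⟨hx1, hx2⟩ ⟨hx3, hx4⟩
    have : a + q - 1 ≤ a := by linarith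
    linarith

open Classical in
lemma cond_measurable (a b : ℝ) :
    MeasurableSet {β : ℝ | ∃ m : ℤ, a ≤ β + m ∧ β + m < b} := by
  have : {β : ℝ | ∃ m : ℤ, a ≤ β + m ∧ β + m < b}
      = ⋃ m : ℤ, Set.Ico (a - m) (b - m) := by
    ext β
    simp only [Set.mem_setOf_eq, Set.mem_iUnion, Set.mem_Ico]
    constructor
    · rintro ⟨m, h1, h2⟩; exact ⟨m, by linarith, by linarith⟩
    · rintro ⟨m, h1, h2⟩; exact ⟨m, by linarith, by linarith⟩
  rw [this]
  exact MeasurableSet.iUnion fun m => measurableSet_Ico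

end CouplingAux

open Classical in
/-- Given biases `p` and a seed `β`, set `A j = 1` iff some integer translate of
`β` lands in `[α_j, α_j + p_j)`, where `α_j = Σ_{j' < j} p_{j'}`. -/
noncomputable def couplingSampler {n : ℕ} (p : Fin n → ℝ) (β : ℝ) : Fin n → Bool :=
  fun j =>
    if ∃ m : ℤ, (∑ j' ∈ Finset.Iio j, p j') ≤ β + m ∧
        β + m < (∑ j' ∈ Finset.Iio j, p j') + p j
    then true else false

lemma couplingSampler_measurable {n : ℕ} (p : Fin n → ℝ) :
    Measurable (couplingSampler p) := by
  rw [measurable_pi_iff]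
  intro j
  unfold couplingSampler
  exact Measurable.ite (CouplingAux.cond_measurable _ _) measurable_const measurable_const

lemma icc_ico_vol (s : Set ℝ) :
    volume (s ∩ Set.Icc (0:ℝ) 1) = volume (s ∩ Set.Ico (0:ℝ) 1) := by
  apply le_antisymm
  · calc volume (s ∩ Set.Icc (0:ℝ) 1) ≤ volume ((s ∩ Set.Ico (0:ℝ) 1) ∪ {1}) := by
          apply measure_mono
          rintro x ⟨hx, hx0, hx1⟩
          rcases lt_or_eq_of_le hx1 with h | h
          · exact Or.inl ⟨hx, hx0, h⟩
          · exact Or.inr h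
      _ ≤ volume (s ∩ Set.Ico (0:ℝ) 1) + volume ({1} : Set ℝ) := measure_union_le _ _
      _ = volume (s ∩ Set.Ico (0:ℝ) 1) := by rw [Real.volume_singleton, add_zero]
  · apply measure_mono
    rintro x ⟨hx, hx0, hx1⟩
    exact ⟨hx, hx0, hx1.le⟩

theorem stmt16 (n : ℕ) (hn : 1 ≤ n) (B : ℕ) (p : Fin n → ℝ)
    (hp : ∀ j, p j ∈ Set.Icc (0 : ℝ) 1) (hsum : ∑ j, p j = (B : ℝ)) :
    (∃ μ : Measure (Fin n → Bool), IsProbabilityMeasure μ ∧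
      (∀ j, μ {A : Fin n → Bool | A j = true} = ENNReal.ofReal (p j)) ∧
      (∀ᵐ A ∂μ, ∑ j, (if A j then (1 : ℕ) else 0) = B)) ∧
    -- concretely, the pushforward of the uniform distribution on `[0,1]`
    -- under `couplingSampler p` has these two properties:
    (IsProbabilityMeasure
        (Measure.map (couplingSampler p) (volume.restrict (Set.Icc (0 : ℝ) 1))) ∧
      (∀ j, Measure.map (couplingSampler p) (volume.restrict (Set.Icc (0 : ℝ) 1))
          {A : Fin n → Bool | A j = true} = ENNReal.ofReal (p j)) ∧
      (∀ᵐ A ∂(Measure.map (couplingSampler p) (volume.restrict (Set.Icc (0 : ℝ) 1))),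
        ∑ j, (if A j then (1 : ℕ) else 0) = B)) := by
  classical
  have hf : Measurable (couplingSampler p) := couplingSampler_measurable p
  have hprob : IsProbabilityMeasure
      (Measure.map (couplingSampler p) (volume.restrict (Set.Icc (0 : ℝ) 1))) := by
    constructor
    rw [Measure.map_apply hf MeasurableSet.univ]
    simp [Measure.restrict_apply, Real.volume_Icc]
  have hmarg : ∀ j, Measure.map (couplingSampler p) (volume.restrict (Set.Icc (0 : ℝ) 1))
      {A : Fin n → Bool | A j = true} = ENNReal.ofReal (p j) := by
    intro j
    have hsetA : MeasurableSet {A : Fin n → Bool | A j = true} :=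
      (Set.toFinite _).measurableSet
    rw [Measure.map_apply hf hsetA, Measure.restrict_apply (hf hsetA)]
    have hpre : couplingSampler p ⁻¹' {A : Fin n → Bool | A j = true}
        = {β : ℝ | ∃ m : ℤ, (∑ j' ∈ Finset.Iio j, p j') ≤ β + m ∧
            β + m < (∑ j' ∈ Finset.Iio j, p j') + p j} := by
      ext β
      simp [couplingSampler]
    rw [hpre, icc_ico_vol]
    exact CouplingAux.key_measure _ _ (hp j).2
  have has : ∀ᵐ A ∂(Measure.map (couplingSampler p) (volume.restrict (Set.Icc (0 : ℝ) 1))),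
      ∑ j, (if A j then (1 : ℕ) else 0) = B := by
    rw [ae_iff]
    have hsetN : MeasurableSet {A : Fin n → Bool | ¬ (∑ j, (if A j then (1:ℕ) else 0) = B)} :=
      (Set.toFinite _).measurableSet
    rw [Measure.map_apply hf hsetN]
    have : couplingSampler p ⁻¹'
        {A : Fin n → Bool | ¬ (∑ j, (if A j then (1:ℕ) else 0) = B)} = ∅ := by
      ext β
      simp only [Set.mem_preimage, Set.mem_setOf_eq, Set.mem_empty_iff_false, iff_false,
        not_not]
      have := CouplingAux.count_eq p hp hsum β
      rw [← this]
      apply Finset.sum_congr rfl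
      intro j _
      rw [CouplingAux.S_val]
      by_cases hc : ∃ m : ℤ, (∑ j' ∈ Finset.Iio j, p j') ≤ β + m ∧
          β + m < (∑ j' ∈ Finset.Iio j, p j') + p j
      · simp [couplingSampler, hc]
      · simp [couplingSampler, hc]
    rw [this]
    simp
  exact ⟨⟨_, hprob, hmarg, has⟩, hprob, hmarg, has⟩
end

section
/- Let k ≥ 3 be an integer, let v_1 ≥ v_2 ≥ … ≥ v_n > 0, and let B be an integer with 0 ≤ B ≤ n, and set p*_j = m_{v_j}^{-1}(x*) for j ∈ [n]. Then there exists a probability measure μ on {0,1}^n such that: (i) μ-almost surely Σ_{j=1}^n A_j = B; (ii) for each j ∈ [n], μ{A : A_j = 1} = p*_j; and (iii) independent play of μ by all k players is a Nash equilibrium of the Boolean-valued Colonel Blotto game, i.e., for every probability measure ν on {0,1}^n that almost surely satisfies Σ_{j=1}^n A_j ≤ B, the expected Boolean Blotto payoff of a single player drawing her bid vector from ν while the other k−1 players draw independently from μ is at most the expected payoff she receives by drawing from μ. -/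
open MeasureTheory Finset Set

/-- Boolean Colonel Blotto payoff: each battlefield's value is split evenly
among the players who bid the most (`false < true`) on it. -/
noncomputable def boolBlottoPayoff {k n : ℕ} (v : Fin n → ℝ) (A : Fin k → Fin n → Bool)
    (i : Fin k) : ℝ :=
  ∑ j, if ∀ i', A i' j ≤ A i j then
      v j / ((Finset.univ.filter fun i' : Fin k => ∀ i'', A i'' j ≤ A i' j).card : ℝ)
    else 0

/-- Expected payoff of player `i` when each player `i'` independently samples its
Boolean bid vector from `P i'`. -/
noncomputable def boolExpectedPayoff {k n : ℕ} (v : Fin n → ℝ)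
    (P : Fin k → Measure (Fin n → Bool)) (hP : ∀ i, IsProbabilityMeasure (P i))
    (i : Fin k) : ℝ :=
  haveI := hP
  ∫ A, boolBlottoPayoff v A i ∂(Measure.pi P)



namespace BB

noncomputable def g (k : ℕ) (v p : ℝ) : ℝ := (v / k) * ∑ i ∈ range (k-1), (1 - p) ^ i

lemma mMarg_eq_g {k : ℕ} (hk : 3 ≤ k) (v p : ℝ) : mMarg k v p = g k v p := by
  have hk0 : (0:ℝ) < (k:ℝ) := by exact_mod_cast (by omega : (0:ℕ) < k)
  rcases eq_or_ne p 0 with rfl | hp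
  · rw [mMarg, if_pos rfl, g]
    simp only [sub_zero, one_pow, sum_const, card_range, nsmul_eq_mul, mul_one]
    have h1 : ((k-1 : ℕ) : ℝ) = (k:ℝ) - 1 := by
      have : 1 ≤ k := by omega
      push_cast [this]; ring
    rw [h1]; ring
  · rw [mMarg, if_neg hp, g]
    have h := geom_sum_mul (1 - p) (k-1)
    have h2 : (∑ i ∈ range (k-1), (1-p)^i) = (1 - (1-p)^(k-1)) / p := by
      field_simp
      linarith [h]
    rw [h2]

lemma g_strictAnti {k : ℕ} (hk : 3 ≤ k) {v : ℝ} (hv : 0 < v) :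
    ∀ p ∈ Set.Icc (0:ℝ) 1, ∀ q ∈ Set.Icc (0:ℝ) 1, p < q → g k v q < g k v p := by
  intro p hp q hq hpq
  have hk0 : (0:ℝ) < (k:ℝ) := by exact_mod_cast (by omega : (0:ℕ) < k)
  apply mul_lt_mul_of_pos_left _ (by positivity : (0:ℝ) < v / k)
  apply Finset.sum_lt_sum
  · intro i _
    exact pow_le_pow_left₀ (by linarith [hq.2]) (by linarith) i
  · refine ⟨1, Finset.mem_range.2 (by omega), ?_⟩
    simpa using by linarith

lemma g_antitone {k : ℕ} (hk : 3 ≤ k) {v : ℝ} (hv : 0 < v) :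
    ∀ p ∈ Set.Icc (0:ℝ) 1, ∀ q ∈ Set.Icc (0:ℝ) 1, p ≤ q → g k v q ≤ g k v p := by
  intro p hp q hq hpq
  rcases eq_or_lt_of_le hpq with rfl | h
  · exact le_rfl
  · exact (g_strictAnti hk hv p hp q hq h).le

lemma g_one {k : ℕ} (hk : 3 ≤ k) (v : ℝ) : g k v 1 = v / k := by
  rw [g]
  rw [show (1:ℝ) - 1 = 0 by ring]
  rw [Finset.sum_eq_single 0]
  · simp
  · intro i _ hi; exact zero_pow hi
  · intro h; exact absurd (Finset.mem_range.2 (by omega)) h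

lemma g_zero {k : ℕ} (hk : 3 ≤ k) (v : ℝ) : g k v 0 = ((k:ℝ) - 1) * v / k := by
  rw [← mMarg_eq_g hk, mMarg, if_pos rfl]

/-- surjectivity of g onto [v/k, (k-1)v/k] -/
lemma g_surj {k : ℕ} (hk : 3 ≤ k) {v : ℝ} (hv : 0 < v) {x : ℝ}
    (h1 : v / k ≤ x) (h2 : x ≤ ((k:ℝ) - 1) * v / k) :
    ∃ p ∈ Set.Icc (0:ℝ) 1, g k v p = x := by
  have hc : ContinuousOn (g k v) (Set.Icc (0:ℝ) 1) := by
    apply Continuous.continuousOn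
    unfold g
    fun_prop
  have := intermediate_value_Icc' (by norm_num : (0:ℝ) ≤ 1) hc
  have hx : x ∈ Set.Icc (g k v 1) (g k v 0) := by
    rw [g_one hk, g_zero hk]; exact ⟨h1, h2⟩
  obtain ⟨p, hp, hgp⟩ := this hx
  exact ⟨p, hp, hgp⟩

end BB

namespace BB
section minv
variable {k : ℕ} {v : ℝ} {minv : ℝ → ℝ}

structure MinvH (k : ℕ) (v : ℝ) (minv : ℝ → ℝ) : Prop where
  hk : 3 ≤ k
  hv : 0 < v
  inv : ∀ p ∈ Set.Icc (0:ℝ) 1, minv (mMarg k v p) = p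
  lo : ∀ x : ℝ, x < v / k → minv x = 1
  hi : ∀ x : ℝ, ((k:ℝ) - 1) * v / k < x → minv x = 0

variable (H : MinvH k v minv)
include H

/-- on the middle interval, minv is a genuine inverse -/
lemma minv_mid {x : ℝ} (h1 : v / k ≤ x) (h2 : x ≤ ((k:ℝ)-1) * v / k) :
    minv x ∈ Set.Icc (0:ℝ) 1 ∧ mMarg k v (minv x) = x := by
  obtain ⟨p, hp, hgp⟩ := g_surj H.hk H.hv h1 h2
  have hx : x = mMarg k v p := by rw [mMarg_eq_g H.hk]; exact hgp.symm
  have : minv x = p := by rw [hx]; exact H.inv p hp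
  rw [this, ← hx]; exact ⟨hp, rfl⟩

lemma minv_mem (x : ℝ) : minv x ∈ Set.Icc (0:ℝ) 1 := by
  rcases lt_or_ge x (v / k) with h | h1
  · rw [H.lo x h]; norm_num
  rcases le_or_gt x (((k:ℝ)-1) * v / k) with h2 | h2
  · exact (minv_mid H h1 h2).1
  · rw [H.hi x h2]; norm_num

lemma minv_anti {x y : ℝ} (hxy : x ≤ y) : minv y ≤ minv x := by
  rcases lt_or_ge x (v / k) with h | h1
  · rw [H.lo x h]; exact (minv_mem H y).2
  rcases lt_or_ge (((k:ℝ)-1) * v / k) y with h2 | h2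
  · rw [H.hi y h2]; exact (minv_mem H x).1
  -- both in the middle interval
  have hx := minv_mid H h1 (le_trans hxy h2)
  have hy := minv_mid H (le_trans h1 hxy) h2
  by_contra hcon
  push_neg at hcon
  have := g_strictAnti H.hk H.hv _ hx.1 _ hy.1 hcon
  rw [← mMarg_eq_g H.hk, ← mMarg_eq_g H.hk, hx.2, hy.2] at this
  linarith

lemma marg_le {x : ℝ} (h : minv x < 1) : mMarg k v (minv x) ≤ x := by
  rcases lt_or_ge x (v / k) with h1 | h1
  · rw [H.lo x h1] at h; norm_num at h
  rcases le_or_gt x (((k:ℝ)-1) * v / k) with h2 | h2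
  · exact (minv_mid H h1 h2).2.le
  · rw [H.hi x h2, mMarg, if_pos rfl]; linarith

lemma marg_ge {x : ℝ} (h : 0 < minv x) : x ≤ mMarg k v (minv x) := by
  rcases lt_or_ge (((k:ℝ)-1) * v / k) x with h2 | h2
  · rw [H.hi x h2] at h; norm_num at h
  rcases le_or_gt (v / k) x with h1 | h1
  · exact (minv_mid H h1 h2).2.ge
  · rw [H.lo x h1]
    rw [mMarg_eq_g H.hk, g_one H.hk]; linarith

/-- right-continuity-ish : minv (x+δ) ≥ minv x - ε for some δ > 0 -/
lemma minv_right (x : ℝ) {ε : ℝ} (hε : 0 < ε) :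
    ∃ δ > 0, minv x - ε ≤ minv (x + δ) := by
  have hmem := minv_mem H x
  set p := minv x with hp
  rcases eq_or_lt_of_le hmem.1 with h0 | h0
  · exact ⟨1, by norm_num, by rw [← h0]; linarith [(minv_mem H (x+1)).1]⟩
  · -- p > 0
    set ε' := min ε p with hε'
    have hε'0 : 0 < ε' := lt_min hε h0
    set q := p - ε' with hq
    have hq0 : 0 ≤ q := by simp [hq, hε']
    have hq1 : q ∈ Set.Icc (0:ℝ) 1 := ⟨hq0, by have := hmem.2; simp [hq]; linarith⟩
    have hqlt : q < p := by simp [hq]; linarith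
    have hmq : x < mMarg k v q := by
      rcases lt_or_ge x (v / k) with h1 | h1
      · calc x < v / k := h1
          _ = g k v 1 := (g_one H.hk v).symm
          _ ≤ g k v q := g_antitone H.hk H.hv q hq1 1 (by norm_num) hq1.2
          _ = mMarg k v q := (mMarg_eq_g H.hk v q).symm
      · have h2 : x ≤ ((k:ℝ)-1) * v / k := by
          by_contra hcon; push_neg at hcon
          rw [hp, H.hi x hcon] at h0; norm_num at h0
        have hmid := minv_mid H h1 h2
        calc x = mMarg k v p := hmid.2.symm
          _ < mMarg k v q := by
            rw [mMarg_eq_g H.hk, mMarg_eq_g H.hk]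
            exact g_strictAnti H.hk H.hv q hq1 p hmem hqlt
    refine ⟨mMarg k v q - x, by linarith, ?_⟩
    have : x + (mMarg k v q - x) = mMarg k v q := by ring
    rw [this, H.inv q hq1]
    have : ε' ≤ ε := min_le_left _ _
    simp [hq]; linarith

/-- left-continuity-ish : minv (x-δ) ≤ minv x + ε for some δ > 0 -/
lemma minv_left (x : ℝ) {ε : ℝ} (hε : 0 < ε) :
    ∃ δ > 0, minv (x - δ) ≤ minv x + ε := by
  have hmem := minv_mem H x
  set p := minv x with hp
  rcases eq_or_lt_of_le hmem.2 with h1 | h1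
  · exact ⟨1, by norm_num, by rw [h1]; linarith [(minv_mem H (x-1)).2]⟩
  · -- p < 1
    set ε' := min ε (1 - p) with hε'
    have hε'0 : 0 < ε' := lt_min hε (by linarith)
    set q := p + ε' with hq
    have hq1 : q ∈ Set.Icc (0:ℝ) 1 := by
      constructor
      · have := hmem.1; simp [hq]; linarith
      · have : ε' ≤ 1 - p := min_le_right _ _
        simp [hq]; linarith
    have hqgt : p < q := by simp [hq]; linarith
    have hmq : mMarg k v q < x := by
      rcases lt_or_ge (((k:ℝ)-1) * v / k) x with h2 | h2
      · calc mMarg k v q = g k v q := mMarg_eq_g H.hk v q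
          _ ≤ g k v 0 := g_antitone H.hk H.hv 0 (by norm_num) q hq1 hq1.1
          _ = ((k:ℝ)-1) * v / k := g_zero H.hk v
          _ < x := h2
      · have hx1 : v / k ≤ x := by
          by_contra hcon; push_neg at hcon
          rw [hp, H.lo x hcon] at h1; norm_num at h1
        have hmid := minv_mid H hx1 h2
        calc mMarg k v q = g k v q := mMarg_eq_g H.hk v q
          _ < g k v p := g_strictAnti H.hk H.hv p hmem q hq1 hqgt
          _ = mMarg k v p := (mMarg_eq_g H.hk v p).symm
          _ = x := hmid.2
    refine ⟨x - mMarg k v q, by linarith, ?_⟩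
    have : x - (x - mMarg k v q) = mMarg k v q := by ring
    rw [this, H.inv q hq1]
    have : ε' ≤ ε := min_le_left _ _
    simp [hq]; linarith

end minv
end BB

namespace BB
section global
variable {k n B : ℕ} {v : Fin n → ℝ} {minv : Fin n → ℝ → ℝ} {xstar : ℝ} {pstar : Fin n → ℝ}

lemma partA_main (hB : B ≤ n) (H : ∀ j, MinvH k (v j) (minv j))
    (hxstar : xstar = sInf {x : ℝ | ∑ j, minv j x ≤ (B : ℝ)})
    (hpstar : ∀ j, pstar j = minv j xstar) :
    (∀ j, pstar j ∈ Set.Icc (0:ℝ) 1) ∧ (∑ j, pstar j = (B:ℝ)) ∧ 0 ≤ xstar := by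
  have hmem : ∀ j, pstar j ∈ Set.Icc (0:ℝ) 1 := fun j => by
    rw [hpstar j]; exact minv_mem (H j) xstar
  refine ⟨hmem, ?_⟩
  set S : Set ℝ := {x : ℝ | ∑ j, minv j x ≤ (B : ℝ)} with hS
  rcases eq_or_lt_of_le hB with heq | hlt
  · -- B = n : S = univ, xstar = 0
    have hSuniv : S = Set.univ := by
      ext x; simp only [hS, Set.mem_setOf_eq, Set.mem_univ, iff_true]
      have : ∑ j, minv j x ≤ (n:ℝ) := by
        calc ∑ j, minv j x ≤ ∑ _j : Fin n, (1:ℝ) :=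
              Finset.sum_le_sum fun j _ => (minv_mem (H j) x).2
          _ = (n:ℝ) := by simp
      rw [heq]; exact_mod_cast this
    have hnb : ¬ BddBelow S := by
      rw [hSuniv]
      rintro ⟨b, hb⟩
      have := hb (Set.mem_univ (b - 1))
      linarith
    have hx0 : xstar = 0 := by rw [hxstar, Real.sInf_of_not_bddBelow hnb]
    have hp1 : ∀ j, pstar j = 1 := fun j => by
      rw [hpstar j, hx0]
      exact (H j).lo 0 (by
        have := (H j).hv
        have hk0 : (0:ℝ) < (k:ℝ) := by exact_mod_cast (by have := (H j).hk; omega : (0:ℕ) < k)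
        positivity)
    constructor
    · simp only [hp1, Finset.sum_const, Finset.card_univ, Fintype.card_fin, nsmul_eq_mul, mul_one]
      exact_mod_cast congrArg (Nat.cast : ℕ → ℝ) heq.symm
    · rw [hx0]
  · -- B < n
    have hn : 0 < n := by omega
    have j0 : Fin n := ⟨0, hn⟩
    have hSne : S.Nonempty := by
      refine ⟨1 + ∑ j, ((k:ℝ) - 1) * v j / k, ?_⟩
      have hz : ∀ j : Fin n, minv j (1 + ∑ j', ((k:ℝ) - 1) * v j' / k) = 0 := by
        intro j
        apply (H j).hi
        have hterm : ∀ j' : Fin n, (0:ℝ) ≤ ((k:ℝ) - 1) * v j' / k := by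
          intro j'
          have := (H j').hv
          have hk0 : (0:ℝ) < (k:ℝ) := by exact_mod_cast (by have := (H j').hk; omega : (0:ℕ) < k)
          have hk1 : (1:ℝ) ≤ (k:ℝ) := by exact_mod_cast (by have := (H j').hk; omega : 1 ≤ k)
          exact div_nonneg (mul_nonneg (by linarith) this.le) hk0.le
        have := Finset.single_le_sum (f := fun j' => ((k:ℝ) - 1) * v j' / k)
          (fun j' _ => hterm j') (Finset.mem_univ j)
        linarith
      simp only [hS, Set.mem_setOf_eq]
      simp only [hz, Finset.sum_const_zero]
      exact_mod_cast B.zero_le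
    have hlb : ∀ x ∈ S, (Finset.univ.inf' ⟨j0, Finset.mem_univ j0⟩ fun j => v j / k) ≤ x := by
      intro x hx
      have hex : ∃ j : Fin n, minv j x < 1 := by
        by_contra hcon
        push_neg at hcon
        have : (n:ℝ) ≤ ∑ j, minv j x := by
          calc (n:ℝ) = ∑ _j : Fin n, (1:ℝ) := by simp
            _ ≤ ∑ j, minv j x := Finset.sum_le_sum fun j _ => hcon j
        have hxS : ∑ j, minv j x ≤ (B:ℝ) := hx
        have : (n:ℝ) ≤ (B:ℝ) := le_trans this hxS
        have : n ≤ B := by exact_mod_cast this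
        omega
      obtain ⟨j, hj⟩ := hex
      have : v j / k ≤ x := by
        by_contra hcon
        push_neg at hcon
        rw [(H j).lo x hcon] at hj
        norm_num at hj
      exact le_trans (Finset.inf'_le _ (Finset.mem_univ j)) this
    have hbdd : BddBelow S := ⟨_, hlb⟩
    have hm0pos : (0:ℝ) < Finset.univ.inf' ⟨j0, Finset.mem_univ j0⟩ fun j => v j / k := by
      refine (Finset.lt_inf'_iff _).2 ?_
      intro j _
      have := (H j).hv
      have hk0 : (0:ℝ) < (k:ℝ) := by exact_mod_cast (by have := (H j).hk; omega : (0:ℕ) < k)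
      positivity
    have hx0 : 0 ≤ xstar := by
      rw [hxstar]
      exact le_trans hm0pos.le (le_csInf hSne hlb)
    have hxmem : ∀ x ∈ S, xstar ≤ x := by
      intro x hx
      rw [hxstar]; exact csInf_le hbdd hx
    -- S(xstar) ≤ B
    have hle : ∑ j, minv j xstar ≤ (B:ℝ) := by
      by_contra hcon
      push_neg at hcon
      set ε := ∑ j, minv j xstar - (B:ℝ) with hε
      have hεpos : 0 < ε := by linarith
      have hεn : 0 < ε / (2 * n) := by positivity
      choose δf hδfpos hδf using fun j => minv_right (H j) xstar hεn
      set δ := Finset.univ.inf' ⟨j0, Finset.mem_univ j0⟩ δf with hδ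
      have hδpos : 0 < δ := by
        rw [hδ]; exact (Finset.lt_inf'_iff _).2 fun j _ => hδfpos j
      obtain ⟨x, hxS, hxlt⟩ := Real.lt_sInf_add_pos hSne hδpos
      rw [← hxstar] at hxlt
      have hbound : ∀ j : Fin n, minv j xstar - ε / (2 * n) ≤ minv j x := by
        intro j
        have h1 : x ≤ xstar + δf j := by
          have : δ ≤ δf j := Finset.inf'_le _ (Finset.mem_univ j)
          linarith
        calc minv j xstar - ε / (2 * n) ≤ minv j (xstar + δf j) := hδf j
          _ ≤ minv j x := minv_anti (H j) h1
      have hsum : ∑ j, minv j xstar - (n:ℝ) * (ε / (2 * n)) ≤ ∑ j, minv j x := by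
        have := Finset.sum_le_sum fun j (_ : j ∈ Finset.univ) => hbound j
        rw [Finset.sum_sub_distrib] at this
        simp only [Finset.sum_const, Finset.card_univ, Fintype.card_fin, nsmul_eq_mul] at this
        linarith
      have hxB : ∑ j, minv j x ≤ (B:ℝ) := hxS
      have hn' : (0:ℝ) < (n:ℝ) := by exact_mod_cast hn
      have : (n:ℝ) * (ε / (2 * n)) = ε / 2 := by field_simp
      rw [this] at hsum
      linarith
    -- S(xstar) ≥ B
    have hge : (B:ℝ) ≤ ∑ j, minv j xstar := by
      by_contra hcon
      push_neg at hcon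
      set ε := (B:ℝ) - ∑ j, minv j xstar with hε
      have hεpos : 0 < ε := by linarith
      have hεn : 0 < ε / (2 * n) := by positivity
      choose δf hδfpos hδf using fun j => minv_left (H j) xstar hεn
      set δ := Finset.univ.inf' ⟨j0, Finset.mem_univ j0⟩ δf with hδ
      have hδpos : 0 < δ := by
        rw [hδ]; exact (Finset.lt_inf'_iff _).2 fun j _ => hδfpos j
      have hnotS : xstar - δ ∉ S := by
        intro hmm
        have := hxmem _ hmm
        linarith
      have hgtB : (B:ℝ) < ∑ j, minv j (xstar - δ) := by
        by_contra hc2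
        push_neg at hc2
        exact hnotS hc2
      have hbound : ∀ j : Fin n, minv j (xstar - δ) ≤ minv j xstar + ε / (2 * n) := by
        intro j
        have h1 : xstar - δf j ≤ xstar - δ := by
          have : δ ≤ δf j := Finset.inf'_le _ (Finset.mem_univ j)
          linarith
        calc minv j (xstar - δ) ≤ minv j (xstar - δf j) := minv_anti (H j) h1
          _ ≤ minv j xstar + ε / (2 * n) := hδf j
      have hsum : ∑ j, minv j (xstar - δ) ≤ ∑ j, minv j xstar + (n:ℝ) * (ε / (2 * n)) := by
        have := Finset.sum_le_sum fun j (_ : j ∈ Finset.univ) => hbound j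
        rw [Finset.sum_add_distrib] at this
        simp only [Finset.sum_const, Finset.card_univ, Fintype.card_fin, nsmul_eq_mul] at this
        linarith
      have hn' : (0:ℝ) < (n:ℝ) := by exact_mod_cast hn
      have : (n:ℝ) * (ε / (2 * n)) = ε / 2 := by field_simp
      rw [this] at hsum
      linarith
    refine ⟨?_, hx0⟩
    have : ∑ j, minv j xstar = (B:ℝ) := le_antisymm hle hge
    rw [← this]
    exact Finset.sum_congr rfl fun j _ => hpstar j

/-- complementarity: any feasible fractional deviation does not beat pstar -/
lemma partA_comp (H : ∀ j, MinvH k (v j) (minv j))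
    (hpstar : ∀ j, pstar j = minv j xstar)
    (hx0 : 0 ≤ xstar) (hsum : ∑ j, pstar j = (B:ℝ))
    (q : Fin n → ℝ) (hq : ∀ j, q j ∈ Set.Icc (0:ℝ) 1) (hqB : ∑ j, q j ≤ (B:ℝ)) :
    ∑ j, q j * mMarg k (v j) (pstar j) ≤ ∑ j, pstar j * mMarg k (v j) (pstar j) := by
  have key : ∀ j : Fin n, (q j - pstar j) * mMarg k (v j) (pstar j) ≤ (q j - pstar j) * xstar := by
    intro j
    rcases lt_trichotomy (q j) (pstar j) with h | h | h
    · -- q < p : p > 0, marg ≥ xstar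
      have hp0 : 0 < pstar j := lt_of_le_of_lt (hq j).1 h
      have := marg_ge (H j) (x := xstar) (by rw [← hpstar j]; exact hp0)
      rw [← hpstar j] at this
      nlinarith
    · rw [h, sub_self, zero_mul, zero_mul]
    · -- q > p : p < 1, marg ≤ xstar
      have hp1 : pstar j < 1 := lt_of_lt_of_le h (hq j).2
      have := marg_le (H j) (x := xstar) (by rw [← hpstar j]; exact hp1)
      rw [← hpstar j] at this
      nlinarith
  have h1 : ∑ j, (q j - pstar j) * mMarg k (v j) (pstar j) ≤ ∑ j, (q j - pstar j) * xstar :=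
    Finset.sum_le_sum fun j _ => key j
  have h2 : ∑ j, (q j - pstar j) * xstar = (∑ j, q j - (B:ℝ)) * xstar := by
    rw [← Finset.sum_mul, Finset.sum_sub_distrib, hsum]
  have h3 : (∑ j, q j - (B:ℝ)) * xstar ≤ 0 :=
    mul_nonpos_of_nonpos_of_nonneg (by linarith) hx0
  have h4 : ∑ j, (q j - pstar j) * mMarg k (v j) (pstar j) ≤ 0 := by linarith
  have h5 : ∑ j, (q j - pstar j) * mMarg k (v j) (pstar j)
      = ∑ j, q j * mMarg k (v j) (pstar j) - ∑ j, pstar j * mMarg k (v j) (pstar j) := by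
    rw [← Finset.sum_sub_distrib]
    exact Finset.sum_congr rfl fun j _ => by ring
  linarith [h5 ▸ h4]
end global
end BB

open MeasureTheory Finset Set

namespace BB
/-- cumulative sums -/
noncomputable def cum (p : ℕ → ℝ) (j : ℕ) : ℝ := ∑ i ∈ range j, p i

/-- systematic-sampling map -/
noncomputable def phi (p : ℕ → ℝ) (n : ℕ) (u : ℝ) : Fin n → Bool :=
  fun j => decide (⌊cum p j - u⌋ < ⌊cum p (j + 1) - u⌋)

lemma measurable_phi (p : ℕ → ℝ) (n : ℕ) : Measurable (phi p n) := by
  apply measurable_pi_lambda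
  intro j
  have h1 : Measurable fun u : ℝ => (⌊cum p j - u⌋, ⌊cum p (j+1) - u⌋) := by
    refine Measurable.prod ?_ ?_ <;>
      exact Int.measurable_floor.comp (measurable_const.sub measurable_id)
  exact (measurable_of_countable
    (fun q : ℤ × ℤ => decide (q.1 < q.2))).comp h1

lemma floor_lt_floor_iff {a b u : ℝ} :
    ⌊a - u⌋ < ⌊b - u⌋ ↔ ∃ m : ℤ, a - m < u ∧ u ≤ b - m := by
  constructor
  · intro h
    refine ⟨⌊b - u⌋, ?_, ?_⟩
    · have h1 : a - u < ⌊a - u⌋ + 1 := Int.lt_floor_add_one _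
      have h2 : (⌊a - u⌋ : ℝ) + 1 ≤ ⌊b - u⌋ := by exact_mod_cast Int.add_one_le_iff.2 h
      linarith
    · have := Int.floor_le (b - u); linarith
  · rintro ⟨m, h1, h2⟩
    have ha : ⌊a - u⌋ < m := Int.floor_lt.2 (by linarith)
    have hb : m ≤ ⌊b - u⌋ := Int.le_floor.2 (by linarith)
    omega

lemma interval_eq {a b : ℝ} (hab : a ≤ b) (hb1 : b ≤ a + 1) :
    {u : ℝ | ⌊a - u⌋ < ⌊b - u⌋} ∩ Ioc (0:ℝ) 1 =
      Ioc (Int.fract a) (min (b - ⌊a⌋) 1) ∪ Ioc 0 (b - ⌊a⌋ - 1) := by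
  ext u
  simp only [Set.mem_inter_iff, Set.mem_setOf_eq, Set.mem_Ioc, Set.mem_union,
    floor_lt_floor_iff, lt_min_iff, le_min_iff, Int.fract]
  constructor
  · rintro ⟨⟨m, h1, h2⟩, hu0, hu1⟩
    have hfl := Int.floor_le a
    have hfu := Int.lt_floor_add_one a
    have hm2 : m < ⌊a⌋ + 2 := by
      have : (m:ℝ) < (⌊a⌋:ℝ) + 2 := by linarith
      exact_mod_cast this
    have hm1 : ⌊a⌋ ≤ m := by
      have : ((⌊a⌋:ℝ)) < (m:ℝ) + 1 := by linarith
      have h' : (⌊a⌋:ℤ) < m + 1 := by exact_mod_cast this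
      omega
    have hcases : m = ⌊a⌋ ∨ m = ⌊a⌋ + 1 := by omega
    rcases hcases with rfl | rfl
    · left
      push_cast at h1 h2
      exact ⟨by linarith, ⟨by linarith, hu1⟩⟩
    · right
      push_cast at h1 h2
      exact ⟨hu0, by linarith⟩
  · rintro (⟨h1, h2, h3⟩ | ⟨h1, h2⟩)
    · have h0 : (0:ℝ) ≤ a - ⌊a⌋ := by
        rw [Int.self_sub_floor]; exact Int.fract_nonneg a
      exact ⟨⟨⌊a⌋, by linarith, by linarith⟩, by linarith, h3⟩
    · have h4 : a - (⌊a⌋:ℝ) < 1 := by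
        rw [Int.self_sub_floor]; exact Int.fract_lt_one a
      refine ⟨⟨⌊a⌋ + 1, ?_, ?_⟩, h1, ?_⟩
      · push_cast; linarith
      · push_cast; linarith
      · linarith
end BB

namespace BB2
open BB ENNReal

lemma vol_T {a b : ℝ} (hab : a ≤ b) (hb1 : b ≤ a + 1) :
    volume ({u : ℝ | ⌊a - u⌋ < ⌊b - u⌋} ∩ Ioc (0:ℝ) 1) = ENNReal.ofReal (b - a) := by
  rw [interval_eq hab hb1]
  have h4 : a - (⌊a⌋:ℝ) < 1 := by rw [Int.self_sub_floor]; exact Int.fract_lt_one a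
  have h0 : (0:ℝ) ≤ a - ⌊a⌋ := by rw [Int.self_sub_floor]; exact Int.fract_nonneg a
  have hdisj : Disjoint (Ioc (Int.fract a) (min (b - ⌊a⌋) 1)) (Ioc (0:ℝ) (b - ⌊a⌋ - 1)) := by
    rw [Set.disjoint_left]
    intro u hu1 hu2
    have := hu1.1
    rw [Int.fract] at this
    have := hu2.2
    linarith
  rw [measure_union hdisj measurableSet_Ioc]
  rw [Real.volume_Ioc, Real.volume_Ioc, Int.fract]
  rcases le_or_gt (b - (⌊a⌋:ℝ)) 1 with h | h
  · rw [min_eq_left h]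
    have : ENNReal.ofReal (b - ↑⌊a⌋ - 1 - 0) = 0 := by
      rw [ENNReal.ofReal_eq_zero]; linarith
    rw [this, add_zero]
    congr 1; ring
  · rw [min_eq_right h.le]
    rw [← ENNReal.ofReal_add (by linarith) (by linarith)]
    congr 1; ring

/-- the coupling measure -/
noncomputable def bmeas (p : ℕ → ℝ) (n : ℕ) : Measure (Fin n → Bool) :=
  (volume.restrict (Ioc (0:ℝ) 1)).map (phi p n)

instance restr_prob : IsProbabilityMeasure (volume.restrict (Ioc (0:ℝ) 1)) := by
  constructor
  rw [Measure.restrict_apply_univ, Real.volume_Ioc]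
  norm_num

instance bmeas_prob (p : ℕ → ℝ) (n : ℕ) : IsProbabilityMeasure (bmeas p n) :=
  Measure.isProbabilityMeasure_map (measurable_phi p n).aemeasurable

lemma bmeas_apply (p : ℕ → ℝ) (n : ℕ) (s : Set (Fin n → Bool)) :
    bmeas p n s = volume (phi p n ⁻¹' s ∩ Ioc (0:ℝ) 1) := by
  rw [bmeas, Measure.map_apply (measurable_phi p n) s.toFinite.measurableSet,
    Measure.restrict_apply ((measurable_phi p n) s.toFinite.measurableSet)]

lemma bmeas_marginal (p : ℕ → ℝ) {n : ℕ} (hp01 : ∀ i, p i ∈ Set.Icc (0:ℝ) 1) (j : Fin n) :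
    bmeas p n {A | A j = true} = ENNReal.ofReal (p j) := by
  rw [bmeas_apply]
  have hpre : phi p n ⁻¹' {A | A j = true}
      = {u : ℝ | ⌊cum p j - u⌋ < ⌊cum p (j + 1) - u⌋} := by
    ext u
    simp [phi]
  rw [hpre]
  have hc : cum p (j + 1) = cum p j + p j := Finset.sum_range_succ p j
  have h1 : cum p (j:ℕ) ≤ cum p ((j:ℕ) + 1) := by rw [hc]; linarith [(hp01 j).1]
  have h2 : cum p ((j:ℕ) + 1) ≤ cum p (j:ℕ) + 1 := by rw [hc]; linarith [(hp01 j).2]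
  rw [vol_T h1 h2, hc]
  congr 1; ring

lemma bmeas_count (p : ℕ → ℝ) {n B : ℕ} (hp01 : ∀ i, p i ∈ Set.Icc (0:ℝ) 1)
    (hsum : cum p n = (B:ℝ)) :
    ∀ᵐ A ∂(bmeas p n), (∑ j, if A j then (1:ℕ) else 0) = B := by
  rw [bmeas, MeasureTheory.ae_map_iff (measurable_phi p n).aemeasurable
    (Set.toFinite {A : Fin n → Bool | (∑ j, if A j then (1:ℕ) else 0) = B}).measurableSet]
  rw [ae_restrict_iff' measurableSet_Ioc]
  apply ae_of_all
  intro u hu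
  show (∑ j, if phi p n u j then (1:ℕ) else 0) = B
  have step : ∀ j : Fin n,
      (if phi p n u j then (1:ℤ) else 0)
        = ⌊cum p ((j:ℕ)+1) - u⌋ - ⌊cum p (j:ℕ) - u⌋ := by
    intro j
    set m := (j:ℕ) with hmj
    have hc : cum p (m + 1) = cum p m + p m := Finset.sum_range_succ p m
    have hlow : ⌊cum p m - u⌋ ≤ ⌊cum p (m+1) - u⌋ :=
      Int.floor_mono (by rw [hc]; linarith [(hp01 m).1])
    have hhigh : ⌊cum p (m+1) - u⌋ ≤ ⌊cum p m - u⌋ + 1 := by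
      have : cum p (m+1) - u ≤ (cum p m - u) + 1 := by rw [hc]; linarith [(hp01 m).2]
      calc ⌊cum p (m+1) - u⌋ ≤ ⌊(cum p m - u) + 1⌋ := Int.floor_mono this
        _ = ⌊cum p m - u⌋ + 1 := Int.floor_add_one _
    by_cases hφ : phi p n u j
    · rw [if_pos hφ]
      have := of_decide_eq_true hφ
      rw [← hmj] at this
      omega
    · rw [if_neg hφ]
      have : ¬ (⌊cum p m - u⌋ < ⌊cum p (m+1) - u⌋) := fun hcon => hφ (decide_eq_true hcon)
      omega
  have hz : (∑ j : Fin n, if phi p n u j then (1:ℤ) else 0) = (B:ℤ) := by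
    have : (∑ j : Fin n, if phi p n u j then (1:ℤ) else 0)
        = ∑ m ∈ Finset.range n, (⌊cum p (m+1) - u⌋ - ⌊cum p m - u⌋) := by
      rw [← Fin.sum_univ_eq_sum_range (fun m => (⌊cum p (m+1) - u⌋ - ⌊cum p m - u⌋))]
      apply Finset.sum_congr rfl
      intro j _
      exact step j
    rw [this, Finset.sum_range_sub (fun m => ⌊cum p m - u⌋)]
    have hc0 : cum p 0 = 0 := Finset.sum_range_zero p
    rw [hsum, hc0]
    have hB : ⌊(B:ℝ) - u⌋ = (B:ℤ) - 1 := by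
      rw [Int.floor_eq_iff]
      push_cast
      constructor <;> [linarith [hu.2]; linarith [hu.1]]
    have h0 : ⌊(0:ℝ) - u⌋ = -1 := by
      rw [Int.floor_eq_iff]
      push_cast
      constructor <;> [linarith [hu.2]; linarith [hu.1]]
    rw [hB, h0]
    ring
  have : ((∑ j : Fin n, if phi p n u j then (1:ℕ) else 0 : ℕ) : ℤ)
      = (∑ j : Fin n, if phi p n u j then (1:ℤ) else 0) := by
    push_cast
    apply Finset.sum_congr rfl
    intro j _
    split <;> rfl
  exact_mod_cast this.trans hz

end BB2

namespace BB3

variable {α : Type*} [Fintype α] [MeasurableSpace α] [MeasurableSingletonClass α]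

lemma meas_finset (μ : Measure α) (t : Finset α) : μ ↑t = ∑ a ∈ t, μ {a} := by
  have ht : (↑t : Set α) = ⋃ a ∈ t, ({a} : Set α) := by
    ext x; simp
  rw [ht]
  exact measure_biUnion_finset
    (fun x _ y _ hxy => by simp [Set.disjoint_left, hxy])
    (fun b _ => measurableSet_singleton b)

lemma meas_univ (μ : Measure α) [IsProbabilityMeasure μ] :
    ∑ a : α, (μ {a}).toReal = 1 := by
  have h := meas_finset μ Finset.univ
  rw [Finset.coe_univ, measure_univ] at h
  rw [← ENNReal.toReal_sum (fun a _ => measure_ne_top μ {a}), ← h]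
  rfl

lemma meas_set (μ : Measure α) (P : α → Prop) [DecidablePred P] :
    μ {a | P a} = ∑ a ∈ Finset.univ.filter P, μ {a} := by
  rw [← meas_finset]
  congr 1
  ext a; simp

lemma meas_set_toReal (μ : Measure α) [IsProbabilityMeasure μ] (P : α → Prop) [DecidablePred P] :
    (μ {a | P a}).toReal = ∑ a ∈ Finset.univ.filter P, (μ {a}).toReal := by
  rw [meas_set μ P, ENNReal.toReal_sum]
  exact fun a _ => measure_ne_top μ {a}

end BB3

namespace BB4
variable {k n : ℕ}

lemma payoff_formula (v : Fin n → ℝ) (P : Fin k → Measure (Fin n → Bool))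
    (hP : ∀ i, IsProbabilityMeasure (P i)) (i₀ : Fin k) :
    boolExpectedPayoff v P hP i₀
      = ∑ A : Fin k → Fin n → Bool,
          (∏ i, (P i {A i}).toReal) * boolBlottoPayoff v A i₀ := by
  unfold boolExpectedPayoff
  haveI := hP
  rw [integral_fintype (hf := Integrable.of_finite)]
  apply Finset.sum_congr rfl
  intro A _
  rw [smul_eq_mul]
  congr 1
  rw [measureReal_def, ← Set.univ_pi_singleton, Measure.pi_pi, ENNReal.toReal_prod]

end BB4

namespace BB5
open Finset
variable {k n : ℕ}

/-- summing out all battlefield columns except `j` -/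
lemma sum_out (j : Fin n) (F : (Fin k → Bool) → ℝ) (W : Fin k → (Fin n → Bool) → ℝ) :
    ∑ A : Fin k → Fin n → Bool, (∏ i, W i (A i)) * F (fun i => A i j)
      = ∑ c : Fin k → Bool,
          (∏ i, ∑ a ∈ Finset.univ.filter (fun a : Fin n → Bool => a j = c i), W i a) * F c := by
  rw [← Finset.sum_fiberwise (Finset.univ : Finset (Fin k → Fin n → Bool))
    (fun A => (fun i => A i j)) (fun A => (∏ i, W i (A i)) * F (fun i => A i j))]
  apply Finset.sum_congr rfl
  intro c _
  have hfib : Finset.univ.filter (fun A : Fin k → Fin n → Bool => (fun i => A i j) = c)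
      = Fintype.piFinset (fun i => Finset.univ.filter (fun a : Fin n → Bool => a j = c i)) := by
    ext A
    simp [Fintype.mem_piFinset, funext_iff]
  rw [hfib, Finset.prod_univ_sum, Finset.sum_mul]
  apply Finset.sum_congr rfl
  intro A hA
  rw [Fintype.mem_piFinset] at hA
  have : (fun i => A i j) = c := funext fun i => by
    have := hA i; rw [Finset.mem_filter] at this; exact this.2
  rw [this]

variable (i₀ : Fin k)

lemma split_prod (r : Fin k → ℝ) :
    ∏ i, r i = r i₀ * ∏ i : {i : Fin k // i ≠ i₀}, r ↑i := by
  rw [← Finset.prod_erase_mul Finset.univ r (Finset.mem_univ i₀), mul_comm]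
  congr 1
  exact Finset.prod_subtype _ (fun x => by simp [Finset.mem_erase]) r

lemma split_sum_nat (r : Fin k → ℕ) :
    ∑ i, r i = r i₀ + ∑ i : {i : Fin k // i ≠ i₀}, r ↑i := by
  rw [← Finset.sum_erase_add Finset.univ r (Finset.mem_univ i₀), add_comm]
  congr 1
  exact Finset.sum_subtype _ (fun x => by simp [Finset.mem_erase]) r

lemma sum_split (G : (Fin k → Bool) → ℝ) :
    ∑ c : Fin k → Bool, G c
      = ∑ b : Bool, ∑ s : {i : Fin k // i ≠ i₀} → Bool,
          G ((Equiv.funSplitAt i₀ Bool).symm (b, s)) := by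
  rw [← Equiv.sum_comp (Equiv.funSplitAt i₀ Bool).symm G, Fintype.sum_prod_type]

lemma card_others (hk : 1 ≤ k) : Fintype.card {i : Fin k // i ≠ i₀} = k - 1 := by
  have := Fintype.card_subtype_compl (fun i : Fin k => i = i₀)
  simp only [Fintype.card_subtype_eq, Fintype.card_fin] at this
  exact this

/-- The binomial identity. -/
lemma binom_id (K : ℕ) (p : ℝ) :
    ∑ t ∈ range (K+1), (K.choose t : ℝ) * p^t * (1-p)^(K-t) * (1/(t+1))
      = (1/(K+1)) * ∑ i ∈ range (K+1), (1-p)^i := by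
  have hstep : ∀ t, (K.choose t : ℝ) * (1/(t+1)) = ((K+1).choose (t+1) : ℝ) * (1/(K+1)) := by
    intro t
    have h := Nat.add_one_mul_choose_eq K t
    have h' : ((K+1) * K.choose t : ℝ) = ((K+1).choose (t+1) * (t+1) : ℝ) := by
      exact_mod_cast congrArg (Nat.cast : ℕ → ℝ) h
    have hK : ((K:ℝ)+1) ≠ 0 := by positivity
    have ht : ((t:ℝ)+1) ≠ 0 := by positivity
    field_simp
    linarith [h']
  have hL : ∑ t ∈ range (K+1), (K.choose t : ℝ) * p^t * (1-p)^(K-t) * (1/(t+1))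
      = (1/(K+1)) * ∑ t ∈ range (K+1), ((K+1).choose (t+1) : ℝ) * p^t * (1-p)^(K-t) := by
    rw [Finset.mul_sum]
    apply Finset.sum_congr rfl
    intro t _
    have e1 : (K.choose t : ℝ) * p^t * (1-p)^(K-t) * (1/(t+1))
        = ((K.choose t : ℝ) * (1/(t+1))) * (p^t * (1-p)^(K-t)) := by ring
    rw [e1, hstep t]
    ring
  rw [hL]
  congr 1
  -- Ψ = Γ
  by_cases hp : p = 0
  · subst hp
    rw [Finset.sum_eq_single 0]
    · simp
    · intro t _ ht
      simp [zero_pow ht]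
    · simp
  · apply mul_left_cancel₀ hp
    have hΨ : p * ∑ t ∈ range (K+1), ((K+1).choose (t+1) : ℝ) * p^t * (1-p)^(K-t)
        = ∑ t ∈ range (K+1), ((K+1).choose (t+1) : ℝ) * p^(t+1) * (1-p)^((K+1)-(t+1)) := by
      rw [Finset.mul_sum]
      apply Finset.sum_congr rfl
      intro t ht
      rw [Finset.mem_range] at ht
      have : (K+1) - (t+1) = K - t := by omega
      rw [this]
      ring
    have hbin : (1:ℝ) = ∑ s ∈ range (K+2), p^s * (1-p)^((K+1)-s) * ((K+1).choose s : ℝ) := by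
      have := add_pow p (1-p) (K+1)
      rw [show p + (1-p) = 1 by ring, one_pow] at this
      exact this
    have hsplit : ∑ s ∈ range (K+2), p^s * (1-p)^((K+1)-s) * ((K+1).choose s : ℝ)
        = (∑ t ∈ range (K+1), p^(t+1) * (1-p)^((K+1)-(t+1)) * ((K+1).choose (t+1) : ℝ))
          + (1-p)^(K+1) := by
      rw [Finset.sum_range_succ' (fun s => p^s * (1-p)^((K+1)-s) * ((K+1).choose s : ℝ)) (K+1)]
      congr 1
      norm_num
    have hgeom : p * ∑ i ∈ range (K+1), (1-p)^i = 1 - (1-p)^(K+1) := by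
      have := geom_sum_mul (1-p) (K+1)
      have h2 : (∑ i ∈ range (K+1), (1-p)^i) * (-p) = (1-p)^(K+1) - 1 := by
        rw [← this]; ring_nf
      linarith [h2]
    rw [hΨ, hgeom]
    have : ∑ t ∈ range (K+1), ((K+1).choose (t+1) : ℝ) * p^(t+1) * (1-p)^((K+1)-(t+1))
        = ∑ t ∈ range (K+1), p^(t+1) * (1-p)^((K+1)-(t+1)) * ((K+1).choose (t+1) : ℝ) := by
      apply Finset.sum_congr rfl; intro t _; ring
    rw [this]
    linarith [hbin, hsplit]
end BB5

namespace BB6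
open Finset
variable {k : ℕ}

lemma mMarg_eq_g' {k : ℕ} (hk : 3 ≤ k) (v p : ℝ) :
    mMarg k v p = (v / k) * ∑ i ∈ range (k-1), (1 - p) ^ i := by
  have hk0 : (0:ℝ) < (k:ℝ) := by exact_mod_cast (by omega : (0:ℕ) < k)
  rcases eq_or_ne p 0 with rfl | hp
  · rw [mMarg, if_pos rfl]
    simp only [sub_zero, one_pow, sum_const, card_range, nsmul_eq_mul, mul_one]
    have h1 : ((k-1 : ℕ) : ℝ) = (k:ℝ) - 1 := by
      have : 1 ≤ k := by omega
      push_cast [this]; ring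
    rw [h1]; ring
  · rw [mMarg, if_neg hp]
    have h := geom_sum_mul (1 - p) (k-1)
    have h2 : (∑ i ∈ range (k-1), (1-p)^i) = (1 - (1-p)^(k-1)) / p := by
      field_simp
      linarith [h]
    rw [h2]

noncomputable def upay (v : ℝ) (i₀ : Fin k) (c : Fin k → Bool) : ℝ :=
  if ∀ i', c i' ≤ c i₀ then
    v / ((Finset.univ.filter fun i' : Fin k => ∀ i'', c i'' ≤ c i').card : ℝ)
  else 0

lemma battlefield (hk : 3 ≤ k) (v p q : ℝ) (hp : p ∈ Set.Icc (0:ℝ) 1) (i₀ : Fin k)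
    (r : Fin k → Bool → ℝ)
    (hq : r i₀ = fun b => if b then q else 1 - q)
    (hro : ∀ i, i ≠ i₀ → r i = fun b => if b then p else 1 - p) :
    ∑ c : Fin k → Bool, (∏ i, r i (c i)) * upay v i₀ c
      = (v / k) * (1-p)^(k-1) + q * mMarg k v p := by
  classical
  set K := k - 1 with hK
  have hkK : (K:ℝ) + 1 = (k:ℝ) := by
    have : K + 1 = k := by omega
    exact_mod_cast congrArg (Nat.cast : ℕ → ℝ) this
  have hcard : Fintype.card {i : Fin k // i ≠ i₀} = K := BB5.card_others i₀ (by omega)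
  rw [BB5.sum_split i₀]
  -- evaluation lemmas for the recombined vector
  have hci₀ : ∀ b s, (Equiv.funSplitAt i₀ Bool).symm (b, s) i₀ = b := by intro b s; simp
  have hcs : ∀ b s (i : {i : Fin k // i ≠ i₀}),
      (Equiv.funSplitAt i₀ Bool).symm (b, s) ↑i = s i := by
    intro b s i; simp [i.2]
  -- product decomposition
  have hprodsplit : ∀ b s, (∏ i, r i ((Equiv.funSplitAt i₀ Bool).symm (b, s) i))
      = r i₀ b * ∏ i : {i : Fin k // i ≠ i₀}, (if s i then p else 1 - p) := by
    intro b s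
    rw [BB5.split_prod i₀ (fun i => r i ((Equiv.funSplitAt i₀ Bool).symm (b, s) i))]
    rw [hci₀]
    congr 1
    apply Finset.prod_congr rfl
    intro i _
    rw [hcs, hro i i.2]
  -- T s and the product value
  have hprodval : ∀ s : {i : Fin k // i ≠ i₀} → Bool,
      (∏ i : {i : Fin k // i ≠ i₀}, (if s i then p else 1 - p))
        = p ^ (Finset.univ.filter fun i => s i = true).card
          * (1-p) ^ (K - (Finset.univ.filter fun i => s i = true).card) := by
    intro s
    rw [← Finset.prod_filter_mul_prod_filter_not Finset.univ (fun i => s i = true)]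
    have h1 : ∀ i ∈ Finset.univ.filter (fun i => s i = true),
        (if s i then p else 1 - p) = p := by intro i hi; rw [Finset.mem_filter] at hi; simp [hi.2]
    have h2 : ∀ i ∈ Finset.univ.filter (fun i => ¬ s i = true),
        (if s i then p else 1 - p) = 1 - p := by
      intro i hi; rw [Finset.mem_filter] at hi; simp [hi.2]
    rw [Finset.prod_congr rfl h1, Finset.prod_congr rfl h2, Finset.prod_const, Finset.prod_const]
    congr 2
    have := Finset.card_filter_add_card_filter_not (s := Finset.univ)
      (fun i : {i : Fin k // i ≠ i₀} => s i = true)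
    rw [Finset.card_univ, hcard] at this
    omega
  -- payoff when own bid is true
  have hupay_true : ∀ s : {i : Fin k // i ≠ i₀} → Bool,
      upay v i₀ ((Equiv.funSplitAt i₀ Bool).symm (true, s))
        = v / (((Finset.univ.filter fun i => s i = true).card : ℝ) + 1) := by
    intro s
    set c := (Equiv.funSplitAt i₀ Bool).symm (true, s) with hc
    have hc0 : c i₀ = true := hci₀ true s
    have hcsv : ∀ i : {i : Fin k // i ≠ i₀}, c ↑i = s i := hcs true s
    have hcondt : ∀ i', c i' ≤ c i₀ := by
      intro i'; rw [hc0]; exact Bool.le_true _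
    rw [upay, if_pos hcondt]
    congr 1
    have hfe : (Finset.univ.filter fun i' => ∀ i'', c i'' ≤ c i')
        = Finset.univ.filter (fun i' => c i' = true) := by
      ext i'
      simp only [Finset.mem_filter, Finset.mem_univ, true_and]
      constructor
      · intro h
        have h2 := h i₀
        rw [hc0] at h2
        cases hval : c i'
        · rw [hval] at h2; exact absurd h2 (by simp)
        · rfl
      · intro h i''
        rw [h]; exact Bool.le_true _
    rw [hfe, Finset.card_filter]
    rw [BB5.split_sum_nat i₀ (fun i => if c i = true then 1 else 0)]
    have e0 : (if c i₀ = true then 1 else 0) = 1 := by rw [hc0]; simp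
    have e1 : ∀ i : {i : Fin k // i ≠ i₀},
        (if c ↑i = true then 1 else 0) = (if s i = true then 1 else 0) := by
      intro i; rw [hcsv]
    rw [e0, Finset.sum_congr rfl (fun i _ => e1 i)]
    rw [← Finset.card_filter]
    push_cast
    ring
  -- payoff when own bid is false
  have hupay_false : ∀ s : {i : Fin k // i ≠ i₀} → Bool,
      upay v i₀ ((Equiv.funSplitAt i₀ Bool).symm (false, s))
        = if (∀ i, s i = false) then v / k else 0 := by
    intro s
    set c := (Equiv.funSplitAt i₀ Bool).symm (false, s) with hc
    have hc0 : c i₀ = false := hci₀ false s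
    have hcsv : ∀ i : {i : Fin k // i ≠ i₀}, c ↑i = s i := hcs false s
    by_cases hall : ∀ i, s i = false
    · have hallc : ∀ i', c i' = false := by
        intro i'
        by_cases h : i' = i₀
        · subst h; exact hc0
        · rw [show c i' = s ⟨i', h⟩ from hcsv ⟨i', h⟩]; exact hall _
      have hcond : ∀ i', c i' ≤ c i₀ := by
        intro i'; rw [hallc i', hallc i₀]
      rw [upay, if_pos hcond, if_pos hall]
      congr 1
      have : (Finset.univ.filter fun i' : Fin k => ∀ i'', c i'' ≤ c i') = Finset.univ := by
        apply Finset.filter_true_of_mem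
        intro i' _ i''
        rw [hallc i', hallc i'']
      rw [this, Finset.card_univ, Fintype.card_fin]
    · push_neg at hall
      obtain ⟨i, hi⟩ := hall
      have hit : s i = true := by
        cases hsi : s i
        · exact absurd hsi hi
        · rfl
      have hcond : ¬ ∀ i', c i' ≤ c i₀ := by
        intro hcon
        have := hcon ↑i
        rw [hcsv i, hc0, hit] at this
        exact absurd this (by simp)
      rw [upay, if_neg hcond, if_neg (by intro hcon; exact hi (hcon i))]
  -- now compute the two Bool branches
  rw [Fintype.sum_bool]
  have htrue : ∑ s : {i : Fin k // i ≠ i₀} → Bool,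
      (∏ i, r i ((Equiv.funSplitAt i₀ Bool).symm (true, s) i))
        * upay v i₀ ((Equiv.funSplitAt i₀ Bool).symm (true, s))
      = q * (v * ((1/((K:ℝ)+1)) * ∑ i ∈ range (K+1), (1-p)^i)) := by
    have hterm : ∀ s : {i : Fin k // i ≠ i₀} → Bool,
        (∏ i, r i ((Equiv.funSplitAt i₀ Bool).symm (true, s) i))
          * upay v i₀ ((Equiv.funSplitAt i₀ Bool).symm (true, s))
        = q * (p ^ (Finset.univ.filter fun i => s i = true).card
            * (1-p) ^ (K - (Finset.univ.filter fun i => s i = true).card)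
            * (v / (((Finset.univ.filter fun i => s i = true).card : ℝ) + 1))) := by
      intro s
      rw [hprodsplit, hprodval, hupay_true, hq]
      simp only [if_true]
      ring
    rw [Finset.sum_congr rfl (fun s _ => hterm s), ← Finset.mul_sum]
    congr 1
    -- reindex by the subset of true coordinates
    have hbij : ∑ s : {i : Fin k // i ≠ i₀} → Bool,
        (p ^ (Finset.univ.filter fun i => s i = true).card
          * (1-p) ^ (K - (Finset.univ.filter fun i => s i = true).card)
          * (v / (((Finset.univ.filter fun i => s i = true).card : ℝ) + 1)))
        = ∑ t ∈ (Finset.univ : Finset {i : Fin k // i ≠ i₀}).powerset,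
            (p ^ t.card * (1-p) ^ (K - t.card) * (v / ((t.card : ℝ) + 1))) := by
      apply Finset.sum_nbij' (i := fun s => Finset.univ.filter fun i => s i = true)
        (j := fun t => fun i => decide (i ∈ t))
      · intro s _; exact Finset.mem_powerset.2 (Finset.filter_subset _ _)
      · intro t _; exact Finset.mem_univ _
      · intro s _
        funext i
        by_cases h : s i = true <;> simp [h]
      · intro t _
        ext i
        simp
      · intro s _; rfl
    rw [hbij]
    have hcu : (Finset.univ : Finset {i : Fin k // i ≠ i₀}).card = K := by
      rw [Finset.card_univ, hcard]
    rw [Finset.sum_powerset _ (fun t => p ^ t.card * (1-p) ^ (K - t.card) * (v / ((t.card : ℝ) + 1))), hcu]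
    have hinner : ∀ m ∈ range (K+1),
        ∑ t ∈ Finset.powersetCard m (Finset.univ : Finset {i : Fin k // i ≠ i₀}),
          (p ^ t.card * (1-p) ^ (K - t.card) * (v / ((t.card : ℝ) + 1)))
        = (K.choose m : ℝ) * (p ^ m * (1-p) ^ (K - m) * (v / ((m : ℝ) + 1))) := by
      intro m _
      rw [Finset.sum_congr rfl (fun t ht => by
        rw [(Finset.mem_powersetCard.1 ht).2])]
      rw [Finset.sum_const, Finset.card_powersetCard, hcu, nsmul_eq_mul]
    rw [Finset.sum_congr rfl hinner]
    -- apply the binomial identity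
    have := BB5.binom_id K p
    have hrw : ∀ m, (K.choose m : ℝ) * (p ^ m * (1-p) ^ (K - m) * (v / ((m : ℝ) + 1)))
        = v * ((K.choose m : ℝ) * p^m * (1-p)^(K-m) * (1/((m:ℝ)+1))) := by
      intro m; ring
    rw [Finset.sum_congr rfl (fun m _ => hrw m), ← Finset.mul_sum, this]
  have hfalse : ∑ s : {i : Fin k // i ≠ i₀} → Bool,
      (∏ i, r i ((Equiv.funSplitAt i₀ Bool).symm (false, s) i))
        * upay v i₀ ((Equiv.funSplitAt i₀ Bool).symm (false, s))
      = (1-q) * ((1-p)^K * (v/k)) := by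
    rw [Finset.sum_eq_single (fun _ => false)]
    · rw [hprodsplit, hprodval, hupay_false, hq]
      have hfilt : (Finset.univ.filter fun i : {i : Fin k // i ≠ i₀} =>
          (fun _ => false) i = true) = ∅ := by
        apply Finset.filter_false_of_mem
        intro i _
        simp
      rw [hfilt]
      simp only [Finset.card_empty, pow_zero, Nat.sub_zero]
      rw [if_pos (fun _ => trivial)]
      simp only [Bool.false_eq_true, if_false]
      ring
    · intro s _ hs
      rw [hupay_false]
      have : ¬ ∀ i, s i = false := by
        intro hcon
        exact hs (funext hcon)
      rw [if_neg this, mul_zero]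
    · intro h
      exact absurd (Finset.mem_univ _) h
  rw [htrue, hfalse]
  -- final algebra
  rw [mMarg_eq_g' hk]
  have hsplitG : ∑ i ∈ range (K+1), (1-p)^i
      = (∑ i ∈ range K, (1-p)^i) + (1-p)^K := Finset.sum_range_succ _ _
  rw [hsplitG]
  have hkne : ((K:ℝ)+1) ≠ 0 := by positivity
  rw [← hkK]
  have hKk : k - 1 = K := rfl
  rw [hKk]
  field_simp
  ring
end BB6

namespace BB7
open Finset
variable {k n : ℕ}

lemma marg_false (ν : Measure (Fin n → Bool)) [IsProbabilityMeasure ν] (j : Fin n) :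
    (ν {a : Fin n → Bool | a j = false}).toReal
      = 1 - (ν {a : Fin n → Bool | a j = true}).toReal := by
  have hc : {a : Fin n → Bool | a j = false} = {a : Fin n → Bool | a j = true}ᶜ := by
    ext a
    simp only [Set.mem_setOf_eq, Set.mem_compl_iff]
    cases h : a j <;> simp
  rw [hc, prob_compl_eq_one_sub (Set.toFinite _).measurableSet]
  rw [ENNReal.toReal_sub_of_le prob_le_one ENNReal.one_ne_top, ENNReal.toReal_one]

lemma marg_le_one (ν : Measure (Fin n → Bool)) [IsProbabilityMeasure ν] (s : Set (Fin n → Bool)) :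
    (ν s).toReal ≤ 1 := by
  have := prob_le_one (μ := ν) (s := s)
  calc (ν s).toReal ≤ (1 : ENNReal).toReal := ENNReal.toReal_mono ENNReal.one_ne_top this
    _ = 1 := ENNReal.toReal_one

/-- Master payoff formula. -/
lemma master (hk : 3 ≤ k) (v : Fin n → ℝ) (pstar : Fin n → ℝ)
    (hps : ∀ j, pstar j ∈ Set.Icc (0:ℝ) 1) (i₀ : Fin k)
    (P : Fin k → Measure (Fin n → Bool)) (hP : ∀ i, IsProbabilityMeasure (P i))
    (hmarg : ∀ i, i ≠ i₀ → ∀ j, P i {a : Fin n → Bool | a j = true} = ENNReal.ofReal (pstar j)) :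
    boolExpectedPayoff v P hP i₀
      = ∑ j, ((v j / k) * (1 - pstar j)^(k-1)
          + (P i₀ {a : Fin n → Bool | a j = true}).toReal * mMarg k (v j) (pstar j)) := by
  classical
  haveI := hP
  rw [BB4.payoff_formula]
  have hexpand : ∀ A : Fin k → Fin n → Bool,
      boolBlottoPayoff v A i₀ = ∑ j, BB6.upay (v j) i₀ (fun i => A i j) := by
    intro A; rfl
  rw [Finset.sum_congr rfl (fun A _ => by rw [hexpand A, Finset.mul_sum])]
  rw [Finset.sum_comm]
  apply Finset.sum_congr rfl
  intro j _
  rw [BB5.sum_out j (BB6.upay (v j) i₀) (fun i a => (P i {a}).toReal)]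
  have hfil : ∀ (i : Fin k) (b : Bool),
      (∑ a ∈ Finset.univ.filter (fun a : Fin n → Bool => a j = b), (P i {a}).toReal)
        = (P i {a : Fin n → Bool | a j = b}).toReal := by
    intro i b
    rw [BB3.meas_set_toReal (P i) (fun a => a j = b)]
  have happ := BB6.battlefield hk (v j) (pstar j) ((P i₀ {a : Fin n → Bool | a j = true}).toReal)
    (hps j) i₀ (fun i b => (P i {a : Fin n → Bool | a j = b}).toReal)
    ?_ ?_
  · rw [← happ]
    apply Finset.sum_congr rfl
    intro c _
    congr 1
    exact Finset.prod_congr rfl (fun i _ => hfil i (c i))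
  · funext b
    cases b
    · simp only [Bool.false_eq_true, if_false]
      exact marg_false (P i₀) j
    · simp
  · intro i hi
    funext b
    cases b
    · simp only [Bool.false_eq_true, if_false]
      rw [marg_false (P i) j, hmarg i hi j, ENNReal.toReal_ofReal (hps j).1]
    · simp only [if_true]
      rw [hmarg i hi j, ENNReal.toReal_ofReal (hps j).1]

/-- a.e. budget constraint implies marginal budget constraint -/
lemma dev_sum_le {B : ℕ} (ν : Measure (Fin n → Bool)) [IsProbabilityMeasure ν]
    (hae : ∀ᵐ a ∂ν, (∑ j, if a j then (1:ℕ) else 0) ≤ B) :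
    ∑ j, (ν {a : Fin n → Bool | a j = true}).toReal ≤ (B:ℝ) := by
  classical
  have hcnt : ∀ a : Fin n → Bool, (ν {a}).toReal ≠ 0 →
      (∑ j, if a j then (1:ℕ) else 0) ≤ B := by
    intro a ha
    by_contra hcon
    have hsub : ({a} : Set (Fin n → Bool)) ⊆ {a' | ¬ (∑ j, if a' j then (1:ℕ) else 0) ≤ B} := by
      intro x hx
      rw [Set.mem_singleton_iff] at hx
      subst hx
      exact hcon
    have h0 : ν {a' : Fin n → Bool | ¬ (∑ j, if a' j then (1:ℕ) else 0) ≤ B} = 0 := by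
      rw [MeasureTheory.ae_iff] at hae
      exact hae
    have : ν {a} = 0 := le_antisymm (h0 ▸ measure_mono hsub) (by positivity)
    rw [this] at ha
    simp at ha
  -- rewrite the sum of marginals
  have h1 : ∀ j : Fin n, (ν {a : Fin n → Bool | a j = true}).toReal
      = ∑ a : Fin n → Bool, (if a j = true then (ν {a}).toReal else 0) := by
    intro j
    rw [BB3.meas_set_toReal ν (fun a => a j = true), Finset.sum_filter]
  rw [Finset.sum_congr rfl (fun j _ => h1 j), Finset.sum_comm]
  have h2 : ∀ a : Fin n → Bool,
      (∑ j, if a j = true then (ν {a}).toReal else 0)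
        = (ν {a}).toReal * ((∑ j, if a j then (1:ℕ) else 0 : ℕ) : ℝ) := by
    intro a
    push_cast
    rw [Finset.mul_sum]
    apply Finset.sum_congr rfl
    intro j _
    split <;> ring
  rw [Finset.sum_congr rfl (fun a _ => h2 a)]
  have h3 : ∀ a : Fin n → Bool,
      (ν {a}).toReal * ((∑ j, if a j then (1:ℕ) else 0 : ℕ) : ℝ)
        ≤ (ν {a}).toReal * (B:ℝ) := by
    intro a
    by_cases ha : (ν {a}).toReal = 0
    · rw [ha]; simp
    · apply mul_le_mul_of_nonneg_left _ ENNReal.toReal_nonneg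
      exact_mod_cast hcnt a ha
  calc ∑ a : Fin n → Bool, (ν {a}).toReal * ((∑ j, if a j then (1:ℕ) else 0 : ℕ) : ℝ)
      ≤ ∑ a : Fin n → Bool, (ν {a}).toReal * (B:ℝ) := Finset.sum_le_sum fun a _ => h3 a
    _ = (∑ a : Fin n → Bool, (ν {a}).toReal) * (B:ℝ) := by rw [← Finset.sum_mul]
    _ = (B:ℝ) := by rw [BB3.meas_univ ν, one_mul]

end BB7

theorem stmt17 (k n : ℕ) (hk : 3 ≤ k) (B : ℕ) (hB : B ≤ n)
    (v : Fin n → ℝ) (hv : ∀ j, 0 < v j)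
    (hsorted : ∀ i j : Fin n, i ≤ j → v j ≤ v i)
    -- `minv j` is the extended inverse `m_{v_j}^{-1} : ℝ → [0,1]`:
    (minv : Fin n → ℝ → ℝ)
    (hminv_inv : ∀ j, ∀ p ∈ Set.Icc (0 : ℝ) 1, minv j (mMarg k (v j) p) = p)
    (hminv_lo : ∀ j, ∀ x : ℝ, x < v j / k → minv j x = 1)
    (hminv_hi : ∀ j, ∀ x : ℝ, ((k : ℝ) - 1) * v j / k < x → minv j x = 0)
    -- `x* = inf {x : Σ_j m_{v_j}^{-1}(x) ≤ B}` and `p*_j = m_{v_j}^{-1}(x*)`: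
    (xstar : ℝ) (hxstar : xstar = sInf {x : ℝ | ∑ j, minv j x ≤ (B : ℝ)})
    (pstar : Fin n → ℝ) (hpstar : ∀ j, pstar j = minv j xstar) :
    ∃ (μ : Measure (Fin n → Bool)) (hμ : IsProbabilityMeasure μ),
      (∀ᵐ A ∂μ, ∑ j, (if A j then (1 : ℕ) else 0) = B) ∧
      (∀ j, μ {A : Fin n → Bool | A j = true} = ENNReal.ofReal (pstar j)) ∧
      (∀ i₀ : Fin k, ∀ (ν : Measure (Fin n → Bool)) (hν : IsProbabilityMeasure ν),
        (∀ᵐ A ∂ν, ∑ j, (if A j then (1 : ℕ) else 0) ≤ B) →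
        boolExpectedPayoff v (devFamily i₀ μ ν) (devFamily_prob i₀ μ ν hμ hν) i₀ ≤
          boolExpectedPayoff v (fun _ => μ) (fun _ => hμ) i₀) := by
  classical
  have H : ∀ j, BB.MinvH k (v j) (minv j) := fun j =>
    ⟨hk, hv j, hminv_inv j, hminv_lo j, hminv_hi j⟩
  obtain ⟨hps, hsum, hx0⟩ := BB.partA_main hB H hxstar hpstar
  set p : ℕ → ℝ := fun i => if h : i < n then pstar ⟨i, h⟩ else 0 with hp
  have hp01 : ∀ i, p i ∈ Set.Icc (0:ℝ) 1 := by
    intro i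
    by_cases h : i < n
    · simp only [hp, dif_pos h]; exact hps ⟨i, h⟩
    · simp only [hp, dif_neg h]; norm_num
  have hpj : ∀ j : Fin n, p ↑j = pstar j := by
    intro j; simp only [hp, dif_pos j.isLt, Fin.eta]
  have hcum : BB.cum p n = (B:ℝ) := by
    rw [BB.cum, ← Fin.sum_univ_eq_sum_range p n,
      Finset.sum_congr rfl (fun j (_ : j ∈ Finset.univ) => hpj j)]
    exact hsum
  haveI hμprob : IsProbabilityMeasure (BB2.bmeas p n) := BB2.bmeas_prob p n
  have hmargμ : ∀ j : Fin n,
      BB2.bmeas p n {a : Fin n → Bool | a j = true} = ENNReal.ofReal (pstar j) := by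
    intro j; rw [BB2.bmeas_marginal p hp01 j, hpj j]
  refine ⟨BB2.bmeas p n, hμprob, BB2.bmeas_count p hp01 hcum, hmargμ, ?_⟩
  intro i₀ ν hν hae
  haveI := hν
  have hdev := BB7.master hk v pstar hps i₀ (devFamily i₀ (BB2.bmeas p n) ν)
    (devFamily_prob i₀ _ _ hμprob hν)
    (fun i hi j => by rw [devFamily, if_neg hi]; exact hmargμ j)
  have hμprof := BB7.master hk v pstar hps i₀ (fun _ => BB2.bmeas p n)
    (fun _ => hμprob) (fun i _ j => hmargμ j)
  rw [hdev, hμprof]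
  have hdi : devFamily i₀ (BB2.bmeas p n) ν i₀ = ν := by rw [devFamily, if_pos rfl]
  rw [hdi]
  set q : Fin n → ℝ := fun j => (ν {a : Fin n → Bool | a j = true}).toReal with hqdef
  have hq01 : ∀ j, q j ∈ Set.Icc (0:ℝ) 1 :=
    fun j => ⟨ENNReal.toReal_nonneg, BB7.marg_le_one ν _⟩
  have hqB : ∑ j, q j ≤ (B:ℝ) := BB7.dev_sum_le ν hae
  have hcomp := BB.partA_comp H hpstar hx0 hsum q hq01 hqB
  have hμq : ∀ j, ((BB2.bmeas p n) {a : Fin n → Bool | a j = true}).toReal = pstar j :=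
    fun j => by rw [hmargμ j, ENNReal.toReal_ofReal (hps j).1]
  simp only [hμq]
  rw [Finset.sum_add_distrib, Finset.sum_add_distrib]
  linarith [hcomp]
end

section
/- Let k ≥ 3 be an integer, consider n = 2 battlefields with values v_1 = 1 and 0 < v_2 < 1, and common budget B = 1, and set p*_j = m_{v_j}^{-1}(x*) for j ∈ {1,2}. Then: (i) if k ≤ 1/v_2 + 1, then p*_1 = 1 and p*_2 = 0 (no player ever competes in the low-value battlefield); and (ii) if k > 1/v_2 + 1, then p*_2 > 0 (each player competes in the low-value battlefield with nonzero probability). -/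
noncomputable def gAux (k : ℕ) (v p : ℝ) : ℝ :=
  (v / k) * ∑ i ∈ Finset.range (k - 1), (1 - p) ^ i

lemma mMarg_eq_gAux (k : ℕ) (hk : 1 ≤ k) (v p : ℝ) :
    mMarg k v p = gAux k v p := by
  unfold mMarg gAux
  split_ifs with h
  · subst h
    simp only [sub_zero, one_pow, Finset.sum_const, Finset.card_range, nsmul_eq_mul, mul_one]
    rw [Nat.cast_sub hk]
    push_cast
    ring
  · have hgeo : (1 : ℝ) - (1 - p) ^ (k - 1) = p * ∑ i ∈ Finset.range (k - 1), (1 - p) ^ i := by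
      linear_combination geom_sum_mul (1 - p) (k - 1)
    rw [hgeo, mul_comm p, mul_div_assoc, div_self h, mul_one]

lemma gAux_zero (k : ℕ) (hk : 1 ≤ k) (v : ℝ) : gAux k v 0 = ((k : ℝ) - 1) * v / k := by
  unfold gAux
  simp only [sub_zero, one_pow, Finset.sum_const, Finset.card_range, nsmul_eq_mul, mul_one]
  rw [Nat.cast_sub hk]
  push_cast
  ring

lemma gAux_one (k : ℕ) (hk : 2 ≤ k) (v : ℝ) : gAux k v 1 = v / k := by
  unfold gAux
  rw [sub_self, Finset.sum_eq_single_of_mem 0 (Finset.mem_range.2 (by omega))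
    (fun i _ hi => zero_pow hi)]
  simp

lemma gAux_cont (k : ℕ) (v : ℝ) : Continuous (gAux k v) := by
  unfold gAux
  exact continuous_const.mul (continuous_finset_sum _ fun i _ =>
    (continuous_const.sub continuous_id).pow i)

lemma gAux_anti (k : ℕ) (hk : 3 ≤ k) (v : ℝ) (hv : 0 < v) :
    StrictAntiOn (gAux k v) (Set.Icc 0 1) := by
  intro a ha b hb hab
  have hkpos : (0:ℝ) < k := by positivity
  unfold gAux
  apply mul_lt_mul_of_pos_left _ (div_pos hv hkpos)
  apply Finset.sum_lt_sum
  · intro i _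
    exact pow_le_pow_left₀ (by linarith [hb.2]) (by linarith) i
  · exact ⟨1, Finset.mem_range.2 (by omega), by simpa using sub_lt_sub_left hab 1⟩

lemma gAux_mono (k : ℕ) (hk : 3 ≤ k) (v : ℝ) (hv : 0 < v) :
    AntitoneOn (gAux k v) (Set.Icc 0 1) :=
  (gAux_anti k hk v hv).antitoneOn

lemma gAux_surj (k : ℕ) (hk : 3 ≤ k) (v : ℝ) (hv : 0 < v) {x : ℝ}
    (h1 : v / k ≤ x) (h2 : x ≤ ((k : ℝ) - 1) * v / k) :
    ∃ p ∈ Set.Icc (0:ℝ) 1, gAux k v p = x := by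
  have hmem : x ∈ Set.Icc (gAux k v 1) (gAux k v 0) := by
    rw [gAux_one k (by omega) v, gAux_zero k (by omega) v]
    exact ⟨h1, h2⟩
  obtain ⟨p, hp, hpx⟩ := intermediate_value_Icc' zero_le_one ((gAux_cont k v).continuousOn) hmem
  exact ⟨p, hp, hpx⟩

lemma pow_sub_pow_le_aux {a b : ℝ} (hb : 0 ≤ b) (hba : b ≤ a) (ha : a ≤ 1) (i : ℕ) :
    a ^ i - b ^ i ≤ i * (a - b) := by
  induction i with
  | zero => simp
  | succ n ih =>
    have h2 : b ^ n ≤ a ^ n := pow_le_pow_left₀ hb hba n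
    have h3 : 0 ≤ b ^ n := pow_nonneg hb n
    have h4 : b ^ n ≤ 1 := pow_le_one₀ hb (hba.trans ha)
    have key : a * (a ^ n - b ^ n) ≤ a ^ n - b ^ n :=
      mul_le_of_le_one_left (sub_nonneg.2 h2) ha
    rw [pow_succ, pow_succ]
    push_cast
    nlinarith [ih]

lemma gAux_drop (k : ℕ) (hk : 3 ≤ k) (v : ℝ) (hv : 0 < v) {p : ℝ}
    (hp : p ∈ Set.Icc (0:ℝ) 1) :
    v / k * p ≤ gAux k v 0 - gAux k v p := by
  have hkpos : (0:ℝ) < k := by positivity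
  unfold gAux
  rw [sub_zero, ← mul_sub, ← Finset.sum_sub_distrib]
  simp only [one_pow]
  apply mul_le_mul_of_nonneg_left _ (div_nonneg hv.le hkpos.le)
  have h1 : (1:ℝ) - (1 - p) ^ 1 = p := by ring
  calc p = 1 - (1 - p) ^ 1 := h1.symm
    _ ≤ ∑ i ∈ Finset.range (k - 1), (1 - (1 - p) ^ i) := by
        apply Finset.single_le_sum (f := fun i => 1 - (1 - p) ^ i)
          (fun i _ => by
            show (0:ℝ) ≤ 1 - (1 - p) ^ i
            have : (1 - p) ^ i ≤ 1 := pow_le_one₀ (by linarith [hp.2]) (by linarith [hp.1])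
            linarith)
          (Finset.mem_range.2 (by omega))

lemma gAux_lip (k : ℕ) (hk : 3 ≤ k) (v : ℝ) (hv : 0 < v) {a b : ℝ}
    (ha : a ∈ Set.Icc (0:ℝ) 1) (hb : b ∈ Set.Icc (0:ℝ) 1) (hab : a ≤ b) :
    gAux k v a - gAux k v b ≤ (v / k) * ((k : ℝ) - 1) ^ 2 * (b - a) := by
  have hkpos : (0:ℝ) < k := by positivity
  unfold gAux
  rw [← mul_sub, ← Finset.sum_sub_distrib, mul_assoc]
  apply mul_le_mul_of_nonneg_left _ (div_nonneg hv.le hkpos.le)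
  have hk1 : (0:ℝ) ≤ (k:ℝ) - 1 := by
    have : (3:ℝ) ≤ (k:ℝ) := by exact_mod_cast hk
    linarith
  calc ∑ i ∈ Finset.range (k - 1), ((1 - a) ^ i - (1 - b) ^ i)
      ≤ ∑ _i ∈ Finset.range (k - 1), ((k:ℝ) - 1) * (b - a) := by
        apply Finset.sum_le_sum
        intro i hi
        have h1 : (1 - a) ^ i - (1 - b) ^ i ≤ i * ((1 - a) - (1 - b)) :=
          pow_sub_pow_le_aux (by linarith [hb.2]) (by linarith) (by linarith [ha.1]) i
        have h2 : (i : ℝ) ≤ (k : ℝ) - 1 := by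
          have : i < k - 1 := Finset.mem_range.1 hi
          have : (i : ℝ) < ((k - 1 : ℕ) : ℝ) := by exact_mod_cast this
          rw [Nat.cast_sub (by omega)] at this
          push_cast at this
          linarith
        have h3 : (0:ℝ) ≤ b - a := by linarith
        nlinarith
    _ = ((k:ℝ) - 1) ^ 2 * (b - a) := by
        rw [Finset.sum_const, Finset.card_range, nsmul_eq_mul, Nat.cast_sub (by omega)]
        push_cast
        ring

set_option maxHeartbeats 1000000 in
theorem stmt18 (k : ℕ) (hk : 3 ≤ k)
    -- two battlefields, `v 0 = 1` and `0 < v 1 < 1`, common budget `B = 1`: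
    (v : Fin 2 → ℝ) (hv0 : v 0 = 1) (hv1 : 0 < v 1) (hv1' : v 1 < 1)
    -- `minv j` is the extended inverse `m_{v_j}^{-1} : ℝ → [0,1]`:
    (minv : Fin 2 → ℝ → ℝ)
    (hminv_inv : ∀ j, ∀ p ∈ Set.Icc (0 : ℝ) 1, minv j (mMarg k (v j) p) = p)
    (hminv_lo : ∀ j, ∀ x : ℝ, x < v j / k → minv j x = 1)
    (hminv_hi : ∀ j, ∀ x : ℝ, ((k : ℝ) - 1) * v j / k < x → minv j x = 0)
    -- `x* = inf {x : Σ_j m_{v_j}^{-1}(x) ≤ 1}` and `p*_j = m_{v_j}^{-1}(x*)`: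
    (xstar : ℝ) (hxstar : xstar = sInf {x : ℝ | ∑ j, minv j x ≤ (1 : ℝ)})
    (pstar : Fin 2 → ℝ) (hpstar : ∀ j, pstar j = minv j xstar) :
    ((k : ℝ) ≤ 1 / v 1 + 1 → pstar 0 = 1 ∧ pstar 1 = 0) ∧
    (1 / v 1 + 1 < (k : ℝ) → 0 < pstar 1) := by
  have hkR : (3:ℝ) ≤ (k:ℝ) := by exact_mod_cast hk
  have hkpos : (0:ℝ) < (k:ℝ) := by linarith
  set c : ℝ := ((k : ℝ) - 1) * v 1 / k with hc_def
  -- inverse property in terms of gAux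
  have hm0 : ∀ p ∈ Set.Icc (0:ℝ) 1, minv 0 (gAux k 1 p) = p := by
    intro p hp
    have h := hminv_inv 0 p hp
    rwa [hv0, mMarg_eq_gAux k (by omega)] at h
  have hm1 : ∀ p ∈ Set.Icc (0:ℝ) 1, minv 1 (gAux k (v 1) p) = p := by
    intro p hp
    have h := hminv_inv 1 p hp
    rwa [mMarg_eq_gAux k (by omega)] at h
  have hg10 : gAux k (v 1) 0 = c := gAux_zero k (by omega) (v 1)
  have hg11 : gAux k (v 1) 1 = v 1 / k := gAux_one k (by omega) (v 1)
  have hg00 : gAux k 1 0 = ((k:ℝ) - 1) / k := by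
    rw [gAux_zero k (by omega) 1, mul_one]
  have hg01 : gAux k 1 1 = 1 / k := gAux_one k (by omega) 1
  have hv1k : v 1 / k < 1 / k := by gcongr <;> linarith
  set S : Set ℝ := {x : ℝ | ∑ j, minv j x ≤ (1 : ℝ)} with hS_def
  have hSmem : ∀ x : ℝ, x ∈ S ↔ minv 0 x + minv 1 x ≤ 1 := by
    intro x
    simp [hS_def, Fin.sum_univ_two]
  have hbdd : BddBelow S := by
    refine ⟨v 1 / k, fun y hy => ?_⟩
    by_contra hlt
    push_neg at hlt
    have h1 : minv 1 y = 1 := hminv_lo 1 y hlt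
    have h0 : minv 0 y = 1 := by
      apply hminv_lo 0 y
      rw [hv0]
      linarith
    have := (hSmem y).1 hy
    rw [h0, h1] at this
    linarith
  constructor
  · -- case (i)
    intro hcase
    have hkv : ((k:ℝ) - 1) * v 1 ≤ 1 := by
      have h1 : (k:ℝ) - 1 ≤ 1 / v 1 := by linarith
      have := (le_div_iff₀ hv1).1 h1
      linarith
    have hcle : c ≤ 1 / k := by
      rw [hc_def]
      gcongr
    -- minv values at c
    have hminv1c : minv 1 c = 0 := by
      have := hm1 0 ⟨le_refl 0, zero_le_one⟩
      rwa [hg10] at this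
    have hminv0c : minv 0 c = 1 := by
      rcases lt_or_eq_of_le hcle with h | h
      · exact hminv_lo 0 c (by rw [hv0]; exact h)
      · have h1 := hm0 1 ⟨zero_le_one, le_refl 1⟩
        rwa [hg01, ← h] at h1
    have cmem : c ∈ S := by
      rw [hSmem, hminv0c, hminv1c]
      norm_num
    have lb : ∀ y ∈ S, c ≤ y := by
      intro y hy
      by_contra hlt
      push_neg at hlt
      have h0 : minv 0 y = 1 := by
        apply hminv_lo 0 y
        rw [hv0]
        linarith
      have h1pos : 0 < minv 1 y := by
        rcases lt_or_ge y (v 1 / k) with h | h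
        · rw [hminv_lo 1 y h]; norm_num
        · obtain ⟨p, hp, hgp⟩ := gAux_surj k hk (v 1) hv1 h hlt.le
          have hpm := hm1 p hp
          rw [hgp] at hpm
          rw [hpm]
          rcases hp.1.lt_or_eq with h' | h'
          · exact h'
          · exfalso
            rw [← h', hg10] at hgp
            exact absurd hgp (ne_of_lt hlt).symm
      have := (hSmem y).1 hy
      linarith
    have xeq : xstar = c := by
      rw [hxstar]
      exact le_antisymm (csInf_le hbdd cmem) (le_csInf ⟨c, cmem⟩ lb)
    rw [hpstar 0, hpstar 1, xeq]
    exact ⟨hminv0c, hminv1c⟩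
  · -- case (ii)
    intro hcase
    have hkv : 1 < ((k:ℝ) - 1) * v 1 := by
      have h1 : 1 / v 1 < (k:ℝ) - 1 := by linarith
      have := (div_lt_iff₀ hv1).1 h1
      linarith
    have hcgt : 1 / k < c := by
      rw [hc_def]
      exact (div_lt_div_iff_of_pos_right hkpos).2 (by linarith)
    have hclt : c ≤ ((k:ℝ) - 1) * 1 / k := by
      rw [hc_def]
      exact (div_le_div_iff_of_pos_right hkpos).2 (by nlinarith)
    -- find q0 with gAux k 1 q0 = c
    obtain ⟨q0, hq0mem, hq0⟩ := gAux_surj k hk 1 one_pos (x := c)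
      (by rw [one_div] at hcgt ⊢; exact le_of_lt (by simpa [one_div] using hcgt)) hclt
    have hq0lt1 : q0 < 1 := by
      rcases hq0mem.2.lt_or_eq with h | h
      · exact h
      · exfalso
        rw [h, hg01] at hq0
        linarith
    -- quantities
    set C : ℝ := (1 / (k:ℝ)) * ((k:ℝ) - 1) ^ 2 with hC_def
    have hCpos : 0 < C := by
      rw [hC_def]
      have h2 : (0:ℝ) < ((k:ℝ) - 1) ^ 2 := by nlinarith
      exact mul_pos (by positivity) h2
    set D : ℝ := 1 + ((k:ℝ) / v 1) * C with hD_def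
    have hD1 : 1 ≤ D := by
      have : 0 < ((k:ℝ) / v 1) * C := by positivity
      rw [hD_def]; linarith
    have hDpos : 0 < D := by linarith
    set δ : ℝ := (1 - q0) / (2 * D) with hδ_def
    have hδpos : 0 < δ := by
      rw [hδ_def]
      exact div_pos (by linarith) (by linarith)
    have hδD : δ * D = (1 - q0) / 2 := by
      rw [hδ_def]
      field_simp
    have hδle : δ ≤ (1 - q0) / 2 := by
      rw [hδ_def]
      rw [div_le_div_iff₀ (by positivity) (by norm_num)]
      nlinarith
    set q : ℝ := q0 + δ with hq_def
    have hqmem : q ∈ Set.Icc (0:ℝ) 1 := by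
      constructor
      · rw [hq_def]; linarith [hq0mem.1]
      · rw [hq_def]; linarith
    set x : ℝ := gAux k 1 q with hx_def
    have hxltc : x < c := by
      rw [hx_def, ← hq0]
      exact gAux_anti k hk 1 one_pos hq0mem hqmem (by rw [hq_def]; linarith)
    have hxge : 1 / k ≤ x := by
      rw [hx_def, ← hg01]
      exact gAux_mono k hk 1 one_pos hqmem (Set.mem_Icc.2 ⟨zero_le_one, le_refl 1⟩) hqmem.2
    have hxgev1 : v 1 / k ≤ x := le_trans hv1k.le hxge
    have hminv0x : minv 0 x = q := by
      rw [hx_def]; exact hm0 q hqmem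
    obtain ⟨p, hpmem, hgp⟩ := gAux_surj k hk (v 1) hv1 hxgev1 hxltc.le
    have hminv1x : minv 1 x = p := by
      have := hm1 p hpmem
      rwa [hgp] at this
    -- bound p
    have hdrop : v 1 / k * p ≤ c - x := by
      have := gAux_drop k hk (v 1) hv1 hpmem
      rw [hg10, hgp] at this
      exact this
    have hlip : c - x ≤ C * δ := by
      have := gAux_lip k hk 1 one_pos hq0mem hqmem (by rw [hq_def]; linarith)
      rw [hq0, ← hx_def] at this
      calc c - x ≤ 1 / (k:ℝ) * ((k:ℝ) - 1) ^ 2 * (q - q0) := by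
            rw [div_mul_eq_mul_div, one_mul] at this ⊢
            exact this
        _ = C * δ := by rw [hC_def, hq_def]; ring
    have hpbound : p ≤ ((k:ℝ) / v 1) * C * δ := by
      have h1 : v 1 / k * p ≤ C * δ := le_trans hdrop hlip
      have h2 : ((k:ℝ) / v 1) * (v 1 / k * p) = p := by
        field_simp
      calc p = ((k:ℝ) / v 1) * (v 1 / k * p) := h2.symm
        _ ≤ ((k:ℝ) / v 1) * (C * δ) := by
            apply mul_le_mul_of_nonneg_left h1 (by positivity)
        _ = ((k:ℝ) / v 1) * C * δ := by ring
    have hxS : x ∈ S := by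
      rw [hSmem, hminv0x, hminv1x]
      have : q + p ≤ q0 + δ * D := by
        rw [hq_def, hD_def]
        nlinarith [hpbound]
      rw [hδD] at this
      linarith
    have hxstarlt : xstar < c := by
      calc xstar ≤ x := by rw [hxstar]; exact csInf_le hbdd hxS
        _ < c := hxltc
    -- conclude
    rw [hpstar 1]
    rcases lt_or_ge xstar (v 1 / k) with h | h
    · rw [hminv_lo 1 xstar h]; norm_num
    · obtain ⟨p', hp'mem, hgp'⟩ := gAux_surj k hk (v 1) hv1 h hxstarlt.le
      have hpm := hm1 p' hp'mem
      rw [hgp'] at hpm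
      rw [hpm]
      rcases hp'mem.1.lt_or_eq with h' | h'
      · exact h'
      · exfalso
        rw [← h', hg10] at hgp'
        exact absurd hgp' (ne_of_lt hxstarlt).symm
end
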